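/- arXiv:2006.13657 — 6 statements merged into one kernel-verified Lean document; each statement's English description precedes it below -/
import Mathlib

section
/- Let (Ω, P) be a probability space, let m ≥ 1 be an integer, let H be a random variable with Gamma density m^m x^{m-1} e^{-mx}/(m-1)! on x > 0, and let I be a nonnegative random variable independent of H with Laplace transform L(s) = E[e^{-s I}]. Then for all reals a > 0 and σ ≥ 0, P(H ≥ a(I + σ)) = ∑_{k=0}^{m-1} ∑_{p=0}^{k} C(k,p) · ((m a)^k / k!) · σ^p · e^{-m a σ} · (-1)^{k-p} · L^{(k-p)}(m a), where C(k,p) is the binomial coefficient and L^{(j)}(m a) denotes the j-th iterated derivative of L evaluated at m a. -/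
open MeasureTheory Set Real ProbabilityTheory
open Filter Topology
set_option linter.unusedSectionVars false

/-- The Gamma density with integer shape `m` and rate `m` (unit mean),
`f(x) = m^m x^{m-1} e^{-m x}/(m-1)!` for `x > 0` and `0` otherwise. -/
noncomputable def nakagamiGammaPdf (m : ℕ) (x : ℝ) : ℝ :=
  if 0 < x then (m : ℝ) ^ m * x ^ (m - 1) * Real.exp (-(m : ℝ) * x) / (Nat.factorial (m - 1) : ℝ)
  else 0

lemma aux_pow_mul_exp_le (n : ℕ) {c y : ℝ} (hc : 0 < c) (hy : 0 ≤ y) :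
    y ^ n * Real.exp (-(c * y)) ≤ n.factorial / c ^ n := by
  have h := Real.pow_div_factorial_le_exp (x := c*y) (mul_nonneg hc.le hy) n
  have h2 : (c * y) ^ n * Real.exp (-(c * y)) ≤ n.factorial := by
    rw [div_le_iff₀ (by positivity)] at h
    calc (c * y) ^ n * Real.exp (-(c * y)) ≤ (Real.exp (c * y) * n.factorial) * Real.exp (-(c*y)) := by
          apply mul_le_mul_of_nonneg_right h (Real.exp_nonneg _)
      _ = n.factorial := by rw [mul_comm (Real.exp (c*y)) (n.factorial:ℝ), mul_assoc, ← Real.exp_add]; simp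
  rw [mul_pow] at h2
  rw [le_div_iff₀ (by positivity)]
  calc y ^ n * Real.exp (-(c*y)) * c ^ n = c ^ n * y ^ n * Real.exp (-(c*y)) := by ring
    _ ≤ n.factorial := h2

lemma aux_erlang_hasDerivAt (n : ℕ) (M x : ℝ) :
    HasDerivAt (fun t => Real.exp (-(M * t)) * ∑ k ∈ Finset.range (n + 1), (M * t) ^ k / k.factorial)
      (-(M * (M * x) ^ n * Real.exp (-(M * x)) / n.factorial)) x := by
  have he : HasDerivAt (fun t : ℝ => Real.exp (-(M * t))) (Real.exp (-(M * x)) * (-M)) x := by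
    have h1 : HasDerivAt (fun t : ℝ => -(M * t)) (-M) x := by
      simpa using ((hasDerivAt_id x).const_mul M).fun_neg
    exact h1.exp
  have hs : HasDerivAt (fun t : ℝ => ∑ k ∈ Finset.range (n + 1), (M * t) ^ k / k.factorial)
      (∑ k ∈ Finset.range (n + 1), (k : ℝ) * (M * x) ^ (k - 1) * M / k.factorial) x := by
    apply HasDerivAt.fun_sum
    intro k _
    have h1 : HasDerivAt (fun t : ℝ => (M * t) ^ k) ((k : ℝ) * (M * x) ^ (k - 1) * M) x := by
      simpa using ((hasDerivAt_id x).const_mul M).fun_pow k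
    simpa [div_eq_mul_inv] using h1.mul_const ((k.factorial : ℝ)⁻¹)
  have key := he.fun_mul hs
  refine key.congr_deriv ?_
  have hsum : ∑ k ∈ Finset.range (n + 1), (k : ℝ) * (M * x) ^ (k - 1) * M / k.factorial
      = M * ∑ j ∈ Finset.range n, (M * x) ^ j / j.factorial := by
    rw [Finset.sum_range_succ']
    simp only [Nat.cast_zero, zero_mul]
    rw [Finset.mul_sum]
    simp only [Nat.factorial_succ, Nat.cast_mul, Nat.cast_add, Nat.cast_one]
    rw [zero_div, add_zero]
    apply Finset.sum_congr rfl
    intro j _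
    have : ((j:ℝ) + 1) ≠ 0 := by positivity
    field_simp
    ring_nf
    simp only [Nat.add_sub_cancel_left]
  rw [hsum]
  rw [Finset.sum_range_succ]
  ring

lemma aux_exp_decay_integrable (n : ℕ) {M t : ℝ} (hM : 0 < M) (ht : 0 ≤ t) :
    IntegrableOn (fun x => M * (M * x) ^ n * Real.exp (-(M * x)) / n.factorial) (Ioi t) := by
  have hint : IntegrableOn (fun x => (M * M ^ n * (n.factorial * 2 ^ n / M ^ n) / n.factorial)
      * Real.exp (-(M/2) * x)) (Ioi t) :=
    (exp_neg_integrableOn_Ioi t (half_pos hM)).const_mul _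
  apply Integrable.mono' hint
  · apply Continuous.aestronglyMeasurable; continuity
  · filter_upwards [self_mem_ae_restrict measurableSet_Ioi] with x hx
    have hx0 : 0 ≤ x := le_trans ht (le_of_lt hx)
    have hb : x ^ n * Real.exp (-((M/2) * x)) ≤ n.factorial / (M/2) ^ n :=
      aux_pow_mul_exp_le n (half_pos hM) hx0
    have hsplit : Real.exp (-(M * x)) = Real.exp (-((M/2) * x)) * Real.exp (-((M/2) * x)) := by
      rw [← Real.exp_add]; ring_nf
    have hnn : (0:ℝ) ≤ M * (M * x) ^ n * Real.exp (-(M * x)) / n.factorial := by positivity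
    rw [Real.norm_of_nonneg hnn]
    have hfact : (M/2:ℝ) ^ n = M ^ n / 2 ^ n := div_pow M 2 n
    calc M * (M * x) ^ n * Real.exp (-(M * x)) / n.factorial
        = (M * M ^ n / n.factorial) * (x ^ n * Real.exp (-((M/2) * x))) * Real.exp (-((M/2) * x)) := by
          rw [hsplit, mul_pow]; ring
      _ ≤ (M * M ^ n / n.factorial) * (n.factorial / (M/2) ^ n) * Real.exp (-((M/2) * x)) := by
          apply mul_le_mul_of_nonneg_right _ (Real.exp_nonneg _)
          exact mul_le_mul_of_nonneg_left hb (by positivity)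
      _ = M * M ^ n * (n.factorial * 2 ^ n / M ^ n) / n.factorial * Real.exp (-(M/2) * x) := by
          rw [hfact]
          have h1 : (M:ℝ) ^ n ≠ 0 := by positivity
          have h2 : (n.factorial : ℝ) ≠ 0 := by positivity
          field_simp

lemma aux_tail_tendsto (n : ℕ) {M : ℝ} (hM : 0 < M) :
    Filter.Tendsto (fun x => Real.exp (-(M * x)) * ∑ k ∈ Finset.range (n+1), (M * x) ^ k / k.factorial)
      Filter.atTop (𝓝 0) := by
  have hMx : Filter.Tendsto (fun x : ℝ => M * x) Filter.atTop Filter.atTop :=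
    Filter.Tendsto.const_mul_atTop hM Filter.tendsto_id
  have h : Filter.Tendsto (fun x => ∑ k ∈ Finset.range (n+1),
      (M * x) ^ k * Real.exp (-(M * x)) / k.factorial) Filter.atTop (𝓝 0) := by
    have h2 : Filter.Tendsto (fun x => ∑ k ∈ Finset.range (n+1),
        (M * x) ^ k * Real.exp (-(M * x)) / k.factorial) Filter.atTop
        (𝓝 (∑ k ∈ Finset.range (n+1), (0:ℝ))) := by
      apply tendsto_finset_sum
      intro k _
      have hk : Filter.Tendsto (fun y : ℝ => y ^ k * Real.exp (-y)) Filter.atTop (𝓝 0) :=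
        tendsto_pow_mul_exp_neg_atTop_nhds_zero k
      have := (hk.comp hMx).div_const (k.factorial : ℝ)
      simpa using this
    simpa using h2
  apply h.congr
  intro x
  rw [Finset.mul_sum]
  apply Finset.sum_congr rfl
  intro k _
  ring

lemma aux_tail_integral (n : ℕ) {M t : ℝ} (hM : 0 < M) (ht : 0 ≤ t) :
    ∫ x in Ioi t, M * (M * x) ^ n * Real.exp (-(M * x)) / n.factorial
      = Real.exp (-(M * t)) * ∑ k ∈ Finset.range (n+1), (M * t) ^ k / k.factorial := by
  have hderiv : ∀ x ∈ Ici t, HasDerivAt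
      (fun s => -(Real.exp (-(M * s)) * ∑ k ∈ Finset.range (n + 1), (M * s) ^ k / k.factorial))
      (M * (M * x) ^ n * Real.exp (-(M * x)) / n.factorial) x := by
    intro x _
    have := (aux_erlang_hasDerivAt n M x).fun_neg
    simpa using this
  have htend : Filter.Tendsto
      (fun s => -(Real.exp (-(M * s)) * ∑ k ∈ Finset.range (n + 1), (M * s) ^ k / k.factorial))
      Filter.atTop (𝓝 0) := by
    simpa using (aux_tail_tendsto n hM).neg
  have heq := integral_Ioi_of_hasDerivAt_of_tendsto' hderiv (aux_exp_decay_integrable n hM ht) htend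
  rw [heq]; ring

lemma aux_pdf_tail (n : ℕ) {t : ℝ} (ht : 0 ≤ t) :
    ∫⁻ x in Ici t, ENNReal.ofReal (nakagamiGammaPdf (n+1) x)
      = ENNReal.ofReal (Real.exp (-(((n:ℝ)+1) * t))
          * ∑ k ∈ Finset.range (n+1), (((n:ℝ)+1) * t) ^ k / k.factorial) := by
  set M : ℝ := (n:ℝ)+1 with hMdef
  have hM : 0 < M := by positivity
  have h1 : (volume : Measure ℝ).restrict (Ici t) = volume.restrict (Ioi t) :=
    (Measure.restrict_congr_set Ioi_ae_eq_Ici).symm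
  rw [h1]
  have h2 : ∫⁻ x in Ioi t, ENNReal.ofReal (nakagamiGammaPdf (n+1) x)
      = ∫⁻ x in Ioi t, ENNReal.ofReal (M * (M * x) ^ n * Real.exp (-(M * x)) / n.factorial) := by
    apply setLIntegral_congr_fun measurableSet_Ioi
    intro x hx
    have hx0 : 0 < x := lt_of_le_of_lt ht hx
    dsimp only
    congr 1
    rw [nakagamiGammaPdf, if_pos hx0]
    have : ((n+1 : ℕ) : ℝ) = M := by push_cast [hMdef]; ring
    simp only [Nat.add_sub_cancel, this]
    rw [mul_pow, pow_succ]
    ring_nf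
  rw [h2]
  have hint := aux_exp_decay_integrable n hM ht
  have hnn : 0 ≤ᵐ[volume.restrict (Ioi t)]
      fun x => M * (M * x) ^ n * Real.exp (-(M * x)) / n.factorial := by
    filter_upwards [self_mem_ae_restrict measurableSet_Ioi] with x hx
    have hx0 : 0 < x := lt_of_le_of_lt ht hx
    positivity
  rw [← ofReal_integral_eq_lintegral_ofReal hint hnn, aux_tail_integral n hM ht]

section Laplace

variable {Ω : Type*} [MeasurableSpace Ω] (P : Measure Ω) [IsProbabilityMeasure P]
  (I : Ω → ℝ)

lemma aux_Lp_meas (hI : Measurable I) (j : ℕ) (u : ℝ) :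
    AEStronglyMeasurable (fun ω => (-(I ω)) ^ j * Real.exp (-(u * I ω))) P := by
  apply Measurable.aestronglyMeasurable
  exact (hI.neg.pow measurable_const).mul ((measurable_const.mul hI).neg.exp)

lemma aux_Lp_bound (hI0 : ∀ ω, 0 ≤ I ω) (j : ℕ) {u : ℝ} (hu : 0 < u) (ω : Ω) :
    ‖(-(I ω)) ^ j * Real.exp (-(u * I ω))‖ ≤ j.factorial / u ^ j := by
  rw [norm_mul, norm_pow, norm_neg, Real.norm_of_nonneg (hI0 ω), Real.norm_of_nonneg (Real.exp_nonneg _)]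
  exact aux_pow_mul_exp_le j hu (hI0 ω)

lemma aux_Lp_integrable (hI : Measurable I) (hI0 : ∀ ω, 0 ≤ I ω) (j : ℕ) {u : ℝ} (hu : 0 < u) :
    Integrable (fun ω => (-(I ω)) ^ j * Real.exp (-(u * I ω))) P := by
  apply Integrable.mono' (integrable_const (j.factorial / u ^ j)) (aux_Lp_meas P I hI j u)
  filter_upwards with ω
  exact aux_Lp_bound I hI0 j hu ω

lemma aux_Lp_hasDerivAt (hI : Measurable I) (hI0 : ∀ ω, 0 ≤ I ω) (j : ℕ) {s : ℝ} (hs : 0 < s) :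
    HasDerivAt (fun u => ∫ ω, (-(I ω)) ^ j * Real.exp (-(u * I ω)) ∂P)
      (∫ ω, (-(I ω)) ^ (j+1) * Real.exp (-(s * I ω)) ∂P) s := by
  have hε : (0:ℝ) < s/2 := half_pos hs
  have key := hasDerivAt_integral_of_dominated_loc_of_deriv_le (μ := P)
    (F := fun u ω => (-(I ω)) ^ j * Real.exp (-(u * I ω)))
    (F' := fun u ω => (-(I ω)) ^ (j+1) * Real.exp (-(u * I ω)))
    (x₀ := s) (bound := fun _ => (j+1).factorial / (s/2) ^ (j+1)) (Metric.ball_mem_nhds s hε)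
    (Filter.Eventually.of_forall (fun u => aux_Lp_meas P I hI j u))
    (aux_Lp_integrable P I hI hI0 j hs)
    (aux_Lp_meas P I hI (j+1) s)
    ?_ (integrable_const _) ?_
  · exact key.2
  · filter_upwards with ω
    intro u hu
    have hu2 : s/2 < u := by
      have := abs_lt.1 (mem_ball_iff_norm.1 hu)
      linarith [this.1]
    calc ‖(-(I ω)) ^ (j+1) * Real.exp (-(u * I ω))‖
        = (I ω) ^ (j+1) * Real.exp (-(u * I ω)) := by
          rw [norm_mul, norm_pow, norm_neg, Real.norm_of_nonneg (hI0 ω),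
            Real.norm_of_nonneg (Real.exp_nonneg _)]
      _ ≤ (I ω) ^ (j+1) * Real.exp (-((s/2) * I ω)) := by
          apply mul_le_mul_of_nonneg_left _ (pow_nonneg (hI0 ω) _)
          apply Real.exp_le_exp.2
          have := hI0 ω
          nlinarith
      _ ≤ (j+1).factorial / (s/2) ^ (j+1) := aux_pow_mul_exp_le (j+1) hε (hI0 ω)
  · filter_upwards with ω
    intro u hu
    have h1 : HasDerivAt (fun u : ℝ => -(u * I ω)) (-(I ω)) u := by
      simpa using ((hasDerivAt_id u).mul_const (I ω)).fun_neg
    have h2 := (h1.exp).const_mul ((-(I ω)) ^ j)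
    refine h2.congr_deriv ?_
    rw [pow_succ]
    ring

lemma aux_iteratedDeriv_L (hI : Measurable I) (hI0 : ∀ ω, 0 ≤ I ω) (L : ℝ → ℝ) (hL : ∀ s : ℝ, L s = ∫ ω, Real.exp (-(s * I ω)) ∂P)
    (j : ℕ) {s : ℝ} (hs : 0 < s) :
    iteratedDeriv j L s = ∫ ω, (-(I ω)) ^ j * Real.exp (-(s * I ω)) ∂P := by
  induction j generalizing s with
  | zero => simp [hL s]
  | succ j ih =>
    rw [iteratedDeriv_succ]
    have hev : iteratedDeriv j L =ᶠ[𝓝 s]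
        (fun u => ∫ ω, (-(I ω)) ^ j * Real.exp (-(u * I ω)) ∂P) := by
      filter_upwards [Ioi_mem_nhds hs] with u hu
      exact ih hu
    rw [hev.deriv_eq]
    exact (aux_Lp_hasDerivAt P I hI hI0 j hs).deriv

end Laplace

lemma aux_expand (n : ℕ) (s σ y : ℝ) :
    Real.exp (-(s * (y + σ))) * ∑ k ∈ Finset.range (n+1), (s * (y + σ)) ^ k / k.factorial
    = ∑ k ∈ Finset.range (n+1), ∑ p ∈ Finset.range (k+1),
        ((k.choose p : ℝ) * (s ^ k / k.factorial) * σ ^ p * Real.exp (-(s * σ)))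
          * (y ^ (k - p) * Real.exp (-(s * y))) := by
  rw [Finset.mul_sum]
  apply Finset.sum_congr rfl
  intro k _
  have hbin : (σ + y) ^ k = ∑ p ∈ Finset.range (k+1), σ ^ p * y ^ (k - p) * (k.choose p : ℝ) :=
    add_pow σ y k
  have key : Real.exp (-(s * (y + σ))) * ((s * (y + σ)) ^ k / k.factorial)
      = ∑ p ∈ Finset.range (k+1), (σ ^ p * y ^ (k-p) * (k.choose p : ℝ))
          * (s ^ k / k.factorial * (Real.exp (-(s * σ)) * Real.exp (-(s * y)))) := by
    rw [← Finset.sum_mul, ← hbin, ← Real.exp_add,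
      show -(s*σ) + -(s*y) = -(s*(y+σ)) by ring, mul_pow,
      show σ + y = y + σ from add_comm σ y]
    ring
  rw [key]
  apply Finset.sum_congr rfl
  intro p _
  ring

/-- Exact coverage probability through Laplace-transform derivatives: if `H` is Gamma
with shape `m` and rate `m`, `I ≥ 0` is independent of `H` with Laplace transform `L`,
then for `a > 0`, `σ ≥ 0`,
`P(H ≥ a(I + σ)) = ∑_{k=0}^{m-1} ∑_{p=0}^{k} C(k,p) ((m a)^k/k!) σ^p e^{-m a σ}
  (-1)^{k-p} L^{(k-p)}(m a)`. -/
theorem coverage_probability_exact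
    {Ω : Type*} [MeasurableSpace Ω] (P : Measure Ω) [IsProbabilityMeasure P]
    (m : ℕ) (hm : 1 ≤ m)
    (H I : Ω → ℝ) (hH : Measurable H) (hI : Measurable I)
    (hHlaw : P.map H = volume.withDensity (fun x => ENNReal.ofReal (nakagamiGammaPdf m x)))
    (hI0 : ∀ ω, 0 ≤ I ω) (hindep : IndepFun H I P)
    (L : ℝ → ℝ) (hL : ∀ s : ℝ, L s = ∫ ω, Real.exp (-s * I ω) ∂P)
    (a σ : ℝ) (ha : 0 < a) (hσ : 0 ≤ σ) :
    (P {ω | a * (I ω + σ) ≤ H ω}).toReal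
      = ∑ k ∈ Finset.range m, ∑ p ∈ Finset.range (k + 1),
          (k.choose p : ℝ) * (((m : ℝ) * a) ^ k / (Nat.factorial k : ℝ)) * σ ^ p
            * Real.exp (-(m : ℝ) * a * σ) * (-1 : ℝ) ^ (k - p)
            * iteratedDeriv (k - p) L ((m : ℝ) * a) := by
  obtain ⟨n, rfl⟩ : ∃ n, m = n + 1 := ⟨m - 1, (Nat.succ_pred_eq_of_pos hm).symm⟩
  set M : ℝ := (n : ℝ) + 1 with hMdef
  have hMpos : 0 < M := by positivity
  set s : ℝ := M * a with hsdef
  have hs : 0 < s := mul_pos hMpos ha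
  set g : ℝ → ℝ := fun y => Real.exp (-(s * (y + σ)))
      * ∑ k ∈ Finset.range (n+1), (s * (y + σ)) ^ k / k.factorial with hgdef
  haveI : IsProbabilityMeasure (P.map I) := Measure.isProbabilityMeasure_map hI.aemeasurable
  haveI : IsProbabilityMeasure (P.map H) := Measure.isProbabilityMeasure_map hH.aemeasurable
  have hL' : ∀ u : ℝ, L u = ∫ ω, Real.exp (-(u * I ω)) ∂P := fun u => by
    simpa [neg_mul] using hL u
  have hSmeas : MeasurableSet {p : ℝ × ℝ | a * (p.1 + σ) ≤ p.2} :=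
    measurableSet_le ((measurable_fst.add_const σ).const_mul a) measurable_snd
  have hmap : P.map (fun ω => (I ω, H ω)) = (P.map I).prod (P.map H) :=
    (indepFun_iff_map_prod_eq_prod_map_map hI.aemeasurable hH.aemeasurable).mp hindep.symm
  have hev : P {ω | a * (I ω + σ) ≤ H ω}
      = ((P.map I).prod (P.map H)) {p : ℝ × ℝ | a * (p.1 + σ) ≤ p.2} := by
    rw [← hmap, Measure.map_apply (hI.prodMk hH) hSmeas]
    rfl
  have hprod : ((P.map I).prod (P.map H)) {p : ℝ × ℝ | a * (p.1 + σ) ≤ p.2}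
      = ∫⁻ y, (P.map H) (Ici (a * (y + σ))) ∂(P.map I) := by
    rw [Measure.prod_apply hSmeas]
    apply lintegral_congr
    intro y
    congr 1
  have hmu : ∀ t : ℝ, 0 ≤ t → (P.map H) (Ici t)
      = ENNReal.ofReal (Real.exp (-(M * t))
          * ∑ k ∈ Finset.range (n+1), (M * t) ^ k / k.factorial) := by
    intro t ht
    rw [hHlaw, withDensity_apply _ measurableSet_Ici]
    exact aux_pdf_tail n ht
  have hae : ∀ᵐ y ∂(P.map I), y ∈ Ici (0:ℝ) :=
    (ae_map_iff hI.aemeasurable measurableSet_Ici).mpr (Filter.Eventually.of_forall hI0)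
  have hstep : ∫⁻ y, (P.map H) (Ici (a * (y + σ))) ∂(P.map I)
      = ∫⁻ y, ENNReal.ofReal (g y) ∂(P.map I) := by
    apply lintegral_congr_ae
    filter_upwards [hae] with y hy
    have ht : 0 ≤ a * (y + σ) := mul_nonneg ha.le (add_nonneg hy hσ)
    rw [hmu _ ht]
    congr 1
    rw [hgdef]
    have harg : M * (a * (y + σ)) = s * (y + σ) := by rw [hsdef]; ring
    rw [harg]
  have hgcont : Continuous g := by
    rw [hgdef]
    apply Continuous.mul
    · continuity
    · apply continuous_finset_sum
      intro k _
      continuity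
  have hmap2 : ∫⁻ y, ENNReal.ofReal (g y) ∂(P.map I) = ∫⁻ ω, ENNReal.ofReal (g (I ω)) ∂P :=
    lintegral_map hgcont.measurable.ennreal_ofReal hI
  have hg0 : ∀ ω, 0 ≤ g (I ω) := by
    intro ω
    have hu : 0 ≤ s * (I ω + σ) := mul_nonneg hs.le (add_nonneg (hI0 ω) hσ)
    rw [hgdef]
    apply mul_nonneg (Real.exp_nonneg _)
    apply Finset.sum_nonneg
    intro k _
    exact div_nonneg (pow_nonneg hu _) (Nat.cast_nonneg _)
  have hg1 : ∀ ω, g (I ω) ≤ 1 := by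
    intro ω
    have hu : 0 ≤ s * (I ω + σ) := mul_nonneg hs.le (add_nonneg (hI0 ω) hσ)
    rw [hgdef]
    calc Real.exp (-(s * (I ω + σ))) * ∑ k ∈ Finset.range (n+1), (s * (I ω + σ)) ^ k / k.factorial
        ≤ Real.exp (-(s * (I ω + σ))) * Real.exp (s * (I ω + σ)) := by
          apply mul_le_mul_of_nonneg_left (Real.sum_le_exp_of_nonneg hu _) (Real.exp_nonneg _)
      _ = 1 := by rw [← Real.exp_add]; simp
  have hgint : Integrable (fun ω => g (I ω)) P := by
    apply Integrable.mono' (integrable_const 1)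
      ((hgcont.measurable.comp hI).aestronglyMeasurable)
    filter_upwards with ω
    show ‖g (I ω)‖ ≤ 1
    rw [Real.norm_of_nonneg (hg0 ω)]
    exact hg1 ω
  have htoReal : (P {ω | a * (I ω + σ) ≤ H ω}).toReal = ∫ ω, g (I ω) ∂P := by
    rw [hev, hprod, hstep, hmap2,
      ← ofReal_integral_eq_lintegral_ofReal hgint (Filter.Eventually.of_forall hg0),
      ENNReal.toReal_ofReal (integral_nonneg hg0)]
  rw [htoReal]
  have hterm_int : ∀ j : ℕ, Integrable (fun ω => (I ω) ^ j * Real.exp (-(s * I ω))) P := by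
    intro j
    apply ((aux_Lp_integrable P I hI hI0 j hs).const_mul ((-1:ℝ) ^ j)).congr
    filter_upwards with ω
    rw [← mul_assoc, ← mul_pow]
    simp [neg_one_mul]
  have hterm_val : ∀ j : ℕ, ∫ ω, (I ω) ^ j * Real.exp (-(s * I ω)) ∂P
      = (-1:ℝ) ^ j * iteratedDeriv j L s := by
    intro j
    rw [aux_iteratedDeriv_L P I hI hI0 L hL' j hs, ← integral_const_mul]
    apply integral_congr_ae
    filter_upwards with ω
    rw [← mul_assoc, ← mul_pow]
    simp [neg_one_mul]
  have hexpand : ∀ ω, g (I ω) = ∑ k ∈ Finset.range (n+1), ∑ p ∈ Finset.range (k+1),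
      ((k.choose p : ℝ) * (s ^ k / k.factorial) * σ ^ p * Real.exp (-(s * σ)))
        * ((I ω) ^ (k - p) * Real.exp (-(s * I ω))) := fun ω => aux_expand n s σ (I ω)
  calc ∫ ω, g (I ω) ∂P
      = ∫ ω, ∑ k ∈ Finset.range (n+1), ∑ p ∈ Finset.range (k+1),
          ((k.choose p : ℝ) * (s ^ k / k.factorial) * σ ^ p * Real.exp (-(s * σ)))
            * ((I ω) ^ (k - p) * Real.exp (-(s * I ω))) ∂P := by
        exact integral_congr_ae (Filter.Eventually.of_forall hexpand)
    _ = ∑ k ∈ Finset.range (n+1), ∑ p ∈ Finset.range (k + 1),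
          (k.choose p : ℝ) * (((↑(n+1) : ℝ) * a) ^ k / (Nat.factorial k : ℝ)) * σ ^ p
            * Real.exp (-(↑(n+1) : ℝ) * a * σ) * (-1 : ℝ) ^ (k - p)
            * iteratedDeriv (k - p) L ((↑(n+1) : ℝ) * a) := by
        rw [integral_finset_sum _ (fun k _ => integrable_finset_sum _
          (fun p _ => (hterm_int (k - p)).const_mul _))]
        apply Finset.sum_congr rfl
        intro k _
        rw [integral_finset_sum _ (fun p _ => (hterm_int (k - p)).const_mul _)]
        apply Finset.sum_congr rfl
        intro p _
        rw [integral_const_mul, hterm_val (k - p)]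
        have hcast : ((↑(n+1) : ℝ) * a) = s := by rw [hsdef, hMdef]; push_cast; ring
        rw [hcast, show (-(↑(n+1) : ℝ)) * a * σ = -(s * σ) by rw [hsdef, hMdef]; push_cast; ring]
        ring
end

section
/- For every integer m ≥ 1 and every real x ≥ 0, the regularized lower incomplete Gamma function satisfies (1 - e^{-b x})^m ≤ (1/(m-1)!) ∫_0^x t^{m-1} e^{-t} dt, where b = (m!)^{-1/m}. -/
open MeasureTheory Set Real

section AlzerAux

open Filter Topology

/-- Key inequality: `u² e^{-u} ≤ (1-e^{-u})²` for `u ≥ 0`. -/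
lemma alzer_key (u : ℝ) (hu : 0 ≤ u) :
    u ^ 2 * Real.exp (-u) ≤ (1 - Real.exp (-u)) ^ 2 := by
  have h1 : u * Real.exp (-(u/2)) ≤ 1 - Real.exp (-u) := by
    have hs : u / 2 ≤ Real.sinh (u / 2) := Real.self_le_sinh_iff.2 (by linarith)
    rw [Real.sinh_eq] at hs
    have hmul := mul_le_mul_of_nonneg_right (by linarith : u ≤ Real.exp (u/2) - Real.exp (-(u/2)))
      (Real.exp_nonneg (-(u/2)))
    calc u * Real.exp (-(u/2)) ≤ (Real.exp (u/2) - Real.exp (-(u/2))) * Real.exp (-(u/2)) := hmul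
      _ = 1 - Real.exp (-u) := by
          rw [sub_mul, ← Real.exp_add, ← Real.exp_add]
          norm_num
          ring_nf
  have h0 : 0 ≤ u * Real.exp (-(u/2)) := mul_nonneg hu (Real.exp_nonneg _)
  calc u ^ 2 * Real.exp (-u) = (u * Real.exp (-(u/2))) ^ 2 := by
        rw [mul_pow, ← Real.exp_nat_mul]; ring_nf
    _ ≤ (1 - Real.exp (-u)) ^ 2 := by
        apply pow_le_pow_left₀ h0 h1

noncomputable def alzerH (M b x : ℝ) : ℝ :=
  M * (Real.log x + Real.log b - Real.log (1 - Real.exp (-(b * x)))) - (1 - b) * x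

noncomputable def alzerH' (M b x : ℝ) : ℝ :=
  M * (x⁻¹ - b * Real.exp (-(b * x)) / (1 - Real.exp (-(b * x)))) - (1 - b)

noncomputable def alzerH'' (M b x : ℝ) : ℝ :=
  M * (-(x⁻¹ ^ 2) + b ^ 2 * Real.exp (-(b * x)) / (1 - Real.exp (-(b * x))) ^ 2)

lemma alzerE_pos {b x : ℝ} (hb : 0 < b) (hx : 0 < x) :
    0 < 1 - Real.exp (-(b * x)) := by
  have : Real.exp (-(b * x)) < 1 := Real.exp_lt_one_iff.2 (by nlinarith)
  linarith

lemma alzerE_hasDerivAt (b x : ℝ) :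
    HasDerivAt (fun y => 1 - Real.exp (-(b * y))) (b * Real.exp (-(b * x))) x := by
  have h1 : HasDerivAt (fun y : ℝ => -(b * y)) (-b) x := by
    exact (((hasDerivAt_id x).const_mul b).neg).congr_deriv (by simp)
  have := (Real.hasDerivAt_exp (-(b * x))).comp x h1
  simpa [mul_comm, mul_assoc, mul_left_comm] using (this.const_sub 1)

lemma alzerH_hasDerivAt {b x : ℝ} (M : ℝ) (hb : 0 < b) (hx : 0 < x) :
    HasDerivAt (alzerH M b) (alzerH' M b x) x := by
  have hE := alzerE_pos hb hx
  have h1 : HasDerivAt (fun y : ℝ => Real.log y) x⁻¹ x := Real.hasDerivAt_log hx.ne'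
  have h2 : HasDerivAt (fun y => Real.log (1 - Real.exp (-(b * y))))
      (b * Real.exp (-(b * x)) / (1 - Real.exp (-(b * x)))) x := by
    simpa [div_eq_mul_inv, mul_comm, mul_assoc, mul_left_comm] using
      (alzerE_hasDerivAt b x).log hE.ne'
  have h3 : HasDerivAt (fun y : ℝ => (1 - b) * y) (1 - b) x := by
    simpa using (hasDerivAt_id x).const_mul (1 - b)
  have := (((h1.add_const (Real.log b)).sub h2).const_mul M).sub h3
  exact this

lemma alzerH'_hasDerivAt {b x : ℝ} (M : ℝ) (hb : 0 < b) (hx : 0 < x) :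
    HasDerivAt (alzerH' M b) (alzerH'' M b x) x := by
  have hE := alzerE_pos hb hx
  have h1 : HasDerivAt (fun y : ℝ => y⁻¹) (-(x⁻¹ ^ 2)) x := by
    simpa [sq] using hasDerivAt_inv hx.ne'
  have hnum : HasDerivAt (fun y => b * Real.exp (-(b * y)))
      (b * (b * Real.exp (-(b * x))) * (-1)) x := by
    have : HasDerivAt (fun y : ℝ => Real.exp (-(b * y))) (Real.exp (-(b*x)) * (-b)) x := by
      have h1 : HasDerivAt (fun y : ℝ => -(b * y)) (-b) x := by
        exact (((hasDerivAt_id x).const_mul b).neg).congr_deriv (by simp)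
      exact (Real.hasDerivAt_exp (-(b * x))).comp x h1
    have := this.const_mul b
    exact this.congr_deriv (by ring)
  have h2 : HasDerivAt (fun y => b * Real.exp (-(b * y)) / (1 - Real.exp (-(b * y))))
      (-(b ^ 2 * Real.exp (-(b * x)) / (1 - Real.exp (-(b * x))) ^ 2)) x := by
    have := hnum.div (alzerE_hasDerivAt b x) hE.ne'
    refine this.congr_deriv ?_
    field_simp
    ring
  have := ((h1.sub h2).const_mul M).sub_const (1 - b)
  refine this.congr_deriv ?_
  simp [alzerH'']

lemma alzerH''_nonpos {M b x : ℝ} (hM : 0 ≤ M) (hb : 0 < b) (hx : 0 < x) :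
    alzerH'' M b x ≤ 0 := by
  have hE := alzerE_pos hb hx
  have hkey := alzer_key (b * x) (by positivity)
  have h2 : b ^ 2 * Real.exp (-(b * x)) / (1 - Real.exp (-(b * x))) ^ 2 ≤ x⁻¹ ^ 2 := by
    rw [div_le_iff₀ (by positivity)]
    have hx2 : (0:ℝ) < x ^ 2 := by positivity
    rw [← sub_nonneg]
    have : x⁻¹ ^ 2 * (1 - Real.exp (-(b * x))) ^ 2 - b ^ 2 * Real.exp (-(b * x))
        = ((1 - Real.exp (-(b*x))) ^ 2 - (b*x) ^ 2 * Real.exp (-(b*x))) / x ^ 2 := by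
      field_simp
    rw [this]
    apply div_nonneg _ hx2.le
    linarith
  have : -(x⁻¹ ^ 2) + b ^ 2 * Real.exp (-(b * x)) / (1 - Real.exp (-(b * x))) ^ 2 ≤ 0 := by
    linarith
  calc alzerH'' M b x
      = M * (-(x⁻¹ ^ 2) + b ^ 2 * Real.exp (-(b * x)) / (1 - Real.exp (-(b * x))) ^ 2) := rfl
    _ ≤ 0 := mul_nonpos_of_nonneg_of_nonpos hM this

lemma alzerH_concave {M b : ℝ} (hM : 0 ≤ M) (hb : 0 < b) :
    ConcaveOn ℝ (Ioi 0) (alzerH M b) := by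
  apply concaveOn_of_hasDerivWithinAt2_nonpos (convex_Ioi 0)
    (f' := alzerH' M b) (f'' := alzerH'' M b)
  · intro x hx
    exact ((alzerH_hasDerivAt M hb hx).continuousAt.continuousWithinAt)
  · intro x hx
    rw [interior_Ioi] at hx
    exact (alzerH_hasDerivAt M hb hx).hasDerivWithinAt
  · intro x hx
    rw [interior_Ioi] at hx
    exact (alzerH'_hasDerivAt M hb hx).hasDerivWithinAt
  · intro x hx
    rw [interior_Ioi] at hx
    exact alzerH''_nonpos hM hb hx

lemma alzerH_lower {M b t : ℝ} (hM : 0 ≤ M) (hb : 0 < b) (ht : 0 < t) :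
    -(1 - b) * t ≤ alzerH M b t := by
  have hE := alzerE_pos hb ht
  have h1 : Real.log (1 - Real.exp (-(b * t))) ≤ Real.log t + Real.log b := by
    rw [← Real.log_mul ht.ne' hb.ne']
    apply Real.log_le_log hE
    have := Real.add_one_le_exp (-(b * t))
    nlinarith [Real.exp_pos (-(b*t))]
  have : 0 ≤ M * (Real.log t + Real.log b - Real.log (1 - Real.exp (-(b * t)))) := by
    apply mul_nonneg hM; linarith
  simp only [alzerH]; nlinarith

/-- If `alzerH M b c = 0` and `0 < x < c` then `alzerH M b x ≥ 0`. -/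
lemma alzerH_nonneg_left {M b c x : ℝ} (hM : 0 ≤ M) (hb : 0 < b) (hb1 : b ≤ 1)
    (hx : 0 < x) (hxc : x < c) (hc : alzerH M b c = 0) : 0 ≤ alzerH M b x := by
  by_contra hneg
  push_neg at hneg
  set ε : ℝ := -alzerH M b x with hε
  have hεpos : 0 < ε := by simp [hε]; linarith
  have hden : (0:ℝ) < 2 * ((1-b) + 1) := by linarith
  obtain ⟨t, ht0, htx, hts⟩ : ∃ t : ℝ, 0 < t ∧ t < x ∧ (1 - b) * t < ε := by
    refine ⟨min (x/2) (ε / (2 * ((1-b) + 1))), ?_, ?_, ?_⟩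
    · exact lt_min (by linarith) (div_pos hεpos hden)
    · exact (min_le_left _ _).trans_lt (by linarith)
    · have h1 : min (x/2) (ε / (2 * ((1-b) + 1))) ≤ ε / (2 * ((1-b) + 1)) := min_le_right _ _
      have hb0 : 0 ≤ 1 - b := by linarith
      have : (1 - b) * min (x/2) (ε / (2 * ((1-b) + 1))) ≤ (1-b) * (ε / (2 * ((1-b) + 1))) :=
        mul_le_mul_of_nonneg_left h1 hb0
      have h2 : (1-b) * (ε / (2 * ((1-b) + 1))) < ε := by
        rw [mul_div_assoc']
        rw [div_lt_iff₀ (by linarith)]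
        nlinarith
      linarith
  have hA : (0:ℝ) ≤ (c - x)/(c - t) := by apply div_nonneg <;> linarith
  have hB : (0:ℝ) ≤ (x - t)/(c - t) := by apply div_nonneg <;> linarith
  have hAB : (c - x)/(c - t) + (x - t)/(c - t) = 1 := by
    rw [← add_div, div_eq_one_iff_eq (by linarith : c - t ≠ 0)]
    ring
  have hconc := (alzerH_concave hM hb).2 (mem_Ioi.2 ht0) (mem_Ioi.2 (hx.trans hxc)) hA hB hAB
  have hcomb : ((c - x)/(c - t)) • t + ((x - t)/(c - t)) • c = x := by
    simp only [smul_eq_mul]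
    rw [div_mul_eq_mul_div, div_mul_eq_mul_div, ← add_div,
      div_eq_iff (by linarith : c - t ≠ 0)]
    ring
  rw [hcomb, hc] at hconc
  have ha1 : (c - x)/(c - t) ≤ 1 := by
    rw [div_le_one (by linarith)]; linarith
  have hHt := alzerH_lower hM hb ht0
  have h3 : (c - x)/(c - t) * alzerH M b t ≥ (c - x)/(c - t) * (-(1 - b) * t) := by
    apply mul_le_mul_of_nonneg_left hHt (by apply div_nonneg <;> linarith)
  have h4 : (c - x)/(c - t) * (-(1 - b) * t) ≥ -(1 - b) * t := by
    have hnn : 0 ≤ (1 - b) * t := mul_nonneg (by linarith) ht0.le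
    nlinarith [div_nonneg (by linarith : (0:ℝ) ≤ c - x) (by linarith : (0:ℝ) ≤ c - t)]
  have : alzerH M b x ≥ -(1 - b) * t := by
    simp only [smul_eq_mul] at hconc
    linarith
  simp only [hε] at hts
  linarith

variable {m : ℕ}

lemma alzerB_pos (hm : 1 ≤ m) : 0 < (Nat.factorial m : ℝ) ^ (-(1:ℝ)/(m:ℝ)) :=
  Real.rpow_pos_of_pos (by exact_mod_cast m.factorial_pos) _

lemma alzerB_le_one (hm : 1 ≤ m) : (Nat.factorial m : ℝ) ^ (-(1:ℝ)/(m:ℝ)) ≤ 1 := by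
  apply Real.rpow_le_one_of_one_le_of_nonpos
  · exact_mod_cast m.factorial_pos
  · apply div_nonpos_of_nonpos_of_nonneg <;> norm_num

lemma alzerB_pow (hm : 1 ≤ m) :
    ((Nat.factorial m : ℝ) ^ (-(1:ℝ)/(m:ℝ))) ^ m = ((Nat.factorial m : ℝ))⁻¹ := by
  have hm0 : (m:ℝ) ≠ 0 := by exact_mod_cast Nat.one_le_iff_ne_zero.mp hm
  rw [← Real.rpow_natCast ((Nat.factorial m : ℝ) ^ (-(1:ℝ)/(m:ℝ))) m,
    ← Real.rpow_mul (by positivity)]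
  rw [show (-(1:ℝ)/(m:ℝ)) * (m:ℕ) = -1 by field_simp]
  rw [Real.rpow_neg_one]

lemma alzer_AB (hm : 1 ≤ m) {x : ℝ} (hx : 0 < x) :
    x ^ (m-1) * Real.exp (-x) / (Nat.factorial (m-1) : ℝ)
      = (m * ((Nat.factorial m : ℝ) ^ (-(1:ℝ)/(m:ℝ))) *
          Real.exp (-(((Nat.factorial m : ℝ) ^ (-(1:ℝ)/(m:ℝ))) * x)) *
          (1 - Real.exp (-(((Nat.factorial m : ℝ) ^ (-(1:ℝ)/(m:ℝ))) * x))) ^ (m-1)) *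
        Real.exp (alzerH ((m:ℝ)-1) ((Nat.factorial m : ℝ) ^ (-(1:ℝ)/(m:ℝ))) x) := by
  set b : ℝ := (Nat.factorial m : ℝ) ^ (-(1:ℝ)/(m:ℝ)) with hbdef
  have hb : 0 < b := alzerB_pos hm
  have hE : 0 < 1 - Real.exp (-(b * x)) := alzerE_pos hb hx
  set E : ℝ := 1 - Real.exp (-(b * x)) with hEdef
  have hM : ((m:ℝ) - 1) = ((m - 1 : ℕ) : ℝ) := by
    rw [Nat.cast_sub hm]; norm_num
  have hL : Real.log x + Real.log b - Real.log E = Real.log (x * b / E) := by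
    rw [Real.log_div (by positivity) hE.ne', Real.log_mul hx.ne' hb.ne']
  have hexp : Real.exp (alzerH ((m:ℝ)-1) b x)
      = (x * b / E) ^ (m-1) * Real.exp (-(1-b)*x) := by
    rw [alzerH, hM, ← hEdef, hL, Real.exp_sub, Real.exp_nat_mul,
      Real.exp_log (by positivity)]
    rw [neg_mul, Real.exp_neg, div_eq_mul_inv]
  have hee : Real.exp (-(b*x)) * Real.exp (-(1-b)*x) = Real.exp (-x) := by
    rw [← Real.exp_add]; ring_nf
  have hbb : b * b ^ (m-1) = b ^ m := by
    rw [← pow_succ']; congr 1; omega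
  have hfacc : (Nat.factorial m : ℝ) = m * (Nat.factorial (m-1) : ℝ) := by
    exact_mod_cast (Nat.mul_factorial_pred (by omega : m ≠ 0)).symm
  have hfac0 : (Nat.factorial (m-1) : ℝ) ≠ 0 := by
    exact_mod_cast (Nat.factorial_pos (m-1)).ne'
  have hm0 : (m:ℝ) ≠ 0 := by exact_mod_cast Nat.one_le_iff_ne_zero.mp hm
  rw [hexp]
  calc x ^ (m-1) * Real.exp (-x) / (Nat.factorial (m-1) : ℝ)
      = (m:ℝ) * b ^ m * x ^ (m-1) * Real.exp (-x) := by
        rw [alzerB_pow hm, hfacc]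
        field_simp
    _ = ((m:ℝ) * (b * b ^ (m-1))) * x ^ (m-1) * Real.exp (-x) := by rw [hbb]
    _ = (m * b * Real.exp (-(b*x)) * E ^ (m-1)) * ((x * b / E) ^ (m-1) * Real.exp (-(1-b)*x)) := by
        rw [div_pow, mul_pow, ← hee]
        field_simp

lemma alzerInt (hm : 1 ≤ m) :
    IntegrableOn (fun t : ℝ => t ^ (m-1) * Real.exp (-t)) (Ioi 0) := by
  have h := Real.GammaIntegral_convergent (s := (m:ℝ)) (by exact_mod_cast hm)
  apply h.congr_fun ?_ measurableSet_Ioi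
  intro t ht
  show Real.exp (-t) * t ^ ((m:ℝ) - 1) = t ^ (m-1) * Real.exp (-t)
  rw [show (m:ℝ) - 1 = ((m-1 : ℕ) : ℝ) by rw [Nat.cast_sub hm]; norm_num,
    Real.rpow_natCast]
  ring

lemma alzerIntVal (hm : 1 ≤ m) :
    ∫ t in Ioi (0:ℝ), t ^ (m-1) * Real.exp (-t) = (Nat.factorial (m-1) : ℝ) := by
  have h1 : ∫ t in Ioi (0:ℝ), t ^ (m-1) * Real.exp (-t)
      = Real.Gamma (m:ℝ) := by
    rw [Real.Gamma_eq_integral (by exact_mod_cast hm)]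
    apply setIntegral_congr_fun measurableSet_Ioi
    intro t ht
    show t ^ (m-1) * Real.exp (-t) = Real.exp (-t) * t ^ ((m:ℝ) - 1)
    rw [show (m:ℝ) - 1 = ((m-1 : ℕ) : ℝ) by rw [Nat.cast_sub hm]; norm_num,
      Real.rpow_natCast]
    ring
  rw [h1, show (m:ℝ) = ((m-1 : ℕ) : ℝ) + 1 by rw [Nat.cast_sub hm]; norm_num,
    Real.Gamma_nat_eq_factorial]

lemma alzerF_tendsto (hm : 1 ≤ m) :
    Tendsto (fun x : ℝ => (1 / (Nat.factorial (m-1) : ℝ)) *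
      ∫ t in (0:ℝ)..x, t ^ (m-1) * Real.exp (-t)) atTop (𝓝 1) := by
  have := intervalIntegral_tendsto_integral_Ioi 0 (alzerInt hm) tendsto_id
  rw [alzerIntVal hm] at this
  have h2 := this.const_mul (1 / (Nat.factorial (m-1) : ℝ))
  have hfac0 : (Nat.factorial (m-1) : ℝ) ≠ 0 := by
    exact_mod_cast (Nat.factorial_pos (m-1)).ne'
  simpa [hfac0] using h2

lemma alzerG_tendsto {b : ℝ} (hb : 0 < b) :
    Tendsto (fun x : ℝ => (1 - Real.exp (-(b * x))) ^ m) atTop (𝓝 1) := by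
  have h1 : Tendsto (fun x : ℝ => -(b * x)) atTop atBot :=
    tendsto_neg_atTop_atBot.comp (Tendsto.const_mul_atTop hb tendsto_id)
  have h2 : Tendsto (fun x : ℝ => Real.exp (-(b * x))) atTop (𝓝 0) :=
    Real.tendsto_exp_atBot.comp h1
  have h3 := (h2.const_sub 1).pow m
  simpa using h3

end AlzerAux

/-- Lower Alzer inequality for the regularized lower incomplete Gamma function: for an
integer `m ≥ 1`, `x ≥ 0` and `b = (m!)^{-1/m}`,
`(1 - e^{-b x})^m ≤ (1/(m-1)!) ∫_0^x t^{m-1} e^{-t} dt`. -/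
theorem alzer_lower_bound
    (m : ℕ) (hm : 1 ≤ m) (x : ℝ) (hx : 0 ≤ x) :
    (1 - Real.exp (-((Nat.factorial m : ℝ) ^ (-(1 : ℝ) / (m : ℝ))) * x)) ^ m
      ≤ (1 / (Nat.factorial (m - 1) : ℝ)) * ∫ t in (0 : ℝ)..x, t ^ (m - 1) * Real.exp (-t) := by
  classical
  set b : ℝ := (Nat.factorial m : ℝ) ^ (-(1:ℝ)/(m:ℝ)) with hbdef
  have hb : 0 < b := alzerB_pos hm
  have hb1 : b ≤ 1 := alzerB_le_one hm
  have hMnn : (0:ℝ) ≤ (m:ℝ) - 1 := by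
    have : (1:ℝ) ≤ (m:ℝ) := by exact_mod_cast hm
    linarith
  -- the functions
  set F : ℝ → ℝ := fun y => (1 / (Nat.factorial (m-1) : ℝ)) *
    ∫ t in (0:ℝ)..y, t ^ (m-1) * Real.exp (-t) with hFdef
  set G : ℝ → ℝ := fun y => (1 - Real.exp (-(b * y))) ^ m with hGdef
  set f : ℝ → ℝ := fun y => F y - G y with hfdef
  set A : ℝ → ℝ := fun y => y ^ (m-1) * Real.exp (-y) / (Nat.factorial (m-1) : ℝ) with hAdef
  set B : ℝ → ℝ := fun y =>
    m * b * Real.exp (-(b * y)) * (1 - Real.exp (-(b * y))) ^ (m-1) with hBdef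
  have hcontI : Continuous (fun t : ℝ => t ^ (m-1) * Real.exp (-t)) := by continuity
  have hFderiv : ∀ y : ℝ, HasDerivAt F (A y) y := by
    intro y
    have h1 := (hcontI.integral_hasStrictDerivAt 0 y).hasDerivAt
    have h2 := h1.const_mul (1 / (Nat.factorial (m-1) : ℝ))
    refine h2.congr_deriv ?_
    simp [hAdef]
    ring
  have hGderiv : ∀ y : ℝ, HasDerivAt G (B y) y := by
    intro y
    have h1 := (alzerE_hasDerivAt b y).pow m
    refine h1.congr_deriv ?_
    simp [hBdef]
    ring
  have hfderiv : ∀ y : ℝ, HasDerivAt f (A y - B y) y := fun y =>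
    (hFderiv y).sub (hGderiv y)
  -- goal is `G x ≤ F x`
  rw [neg_mul]
  show (1 - Real.exp (-(b * x))) ^ m ≤ F x
  rcases eq_or_lt_of_le hx with hx0 | hxpos
  · subst hx0
    simp [hFdef, zero_pow (by omega : m ≠ 0)]
  by_contra hlt
  push_neg at hlt
  have hfx : f x < 0 := by
    show F x - G x < 0
    have : G x = (1 - Real.exp (-(b * x))) ^ m := rfl
    rw [this]
    linarith
  have hf0 : f 0 = 0 := by
    simp [hfdef, hFdef, hGdef]
    omega
  -- limit of f at infinity is 0
  have hftop : Filter.Tendsto f Filter.atTop (nhds 0) := by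
    have := (alzerF_tendsto hm).sub (alzerG_tendsto (m := m) hb)
    simpa [hfdef, hFdef, hGdef] using this
  -- find T with x < T and f x < f T
  obtain ⟨T, hxT, hfT⟩ : ∃ T : ℝ, x < T ∧ f x < f T := by
    have hev : ∀ᶠ y in Filter.atTop, f x < f y :=
      hftop.eventually (eventually_gt_nhds hfx)
    obtain ⟨T, hT1, hT2⟩ := (hev.and (Filter.eventually_gt_atTop x)).exists
    exact ⟨T, hT2, hT1⟩
  have hcontf : ContinuousOn f (Icc 0 T) :=
    fun y _ => ((hfderiv y).continuousAt).continuousWithinAt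
  obtain ⟨c, hcmem, hcmin⟩ :=
    isCompact_Icc.exists_isMinOn (nonempty_Icc.2 (by linarith : (0:ℝ) ≤ T)) hcontf
  have hxmem : x ∈ Icc 0 T := ⟨hx, hxT.le⟩
  have hfc_le : f c ≤ f x := hcmin hxmem
  have hfcneg : f c < 0 := lt_of_le_of_lt hfc_le hfx
  have hc0 : 0 < c := by
    rcases eq_or_lt_of_le hcmem.1 with h | h
    · exfalso; rw [← h, hf0] at hfcneg; exact lt_irrefl _ hfcneg
    · exact h
  have hcT : c < T := by
    rcases eq_or_lt_of_le hcmem.2 with h | h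
    · exfalso; rw [h] at hfc_le; linarith
    · exact h
  -- local min in the interior gives zero derivative
  have hlocal : IsLocalMin f c := hcmin.isLocalMin (Icc_mem_nhds hc0 hcT)
  have hderiv0 : A c - B c = 0 := hlocal.hasDerivAt_eq_zero (hfderiv c)
  -- hence alzerH at c is 0
  have hBpos : ∀ y : ℝ, 0 < y → 0 < B y := by
    intro y hy
    have hE := alzerE_pos hb hy
    have hmpos : (0:ℝ) < m := by exact_mod_cast Nat.lt_of_lt_of_le Nat.zero_lt_one hm
    simp only [hBdef]
    positivity
  have hABc := alzer_AB hm hc0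
  rw [← hbdef] at hABc
  have hAc : A c = B c * Real.exp (alzerH ((m:ℝ)-1) b c) := by
    simp only [hAdef, hBdef]
    exact hABc
  have hHc : alzerH ((m:ℝ)-1) b c = 0 := by
    have h1 : B c * Real.exp (alzerH ((m:ℝ)-1) b c) = B c := by
      rw [← hAc]; linarith
    have h2 : Real.exp (alzerH ((m:ℝ)-1) b c) = 1 :=
      mul_left_cancel₀ (hBpos c hc0).ne' (by rw [mul_one]; exact h1)
    have h3 := congrArg Real.log h2
    rwa [Real.log_exp, Real.log_one] at h3
  -- f is monotone on [0, c]
  have hmono : MonotoneOn f (Icc 0 c) := by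
    apply monotoneOn_of_deriv_nonneg (convex_Icc 0 c)
      (fun y _ => ((hfderiv y).continuousAt).continuousWithinAt)
      (fun y _ => ((hfderiv y).differentiableAt).differentiableWithinAt)
    intro y hy
    rw [interior_Icc] at hy
    rw [(hfderiv y).deriv]
    have hHy : 0 ≤ alzerH ((m:ℝ)-1) b y :=
      alzerH_nonneg_left hMnn hb hb1 hy.1 hy.2 hHc
    have hAy := alzer_AB hm hy.1
    rw [← hbdef] at hAy
    have : A y = B y * Real.exp (alzerH ((m:ℝ)-1) b y) := by
      simp only [hAdef, hBdef]; exact hAy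
    rw [this]
    have h1 : (1:ℝ) ≤ Real.exp (alzerH ((m:ℝ)-1) b y) := Real.one_le_exp hHy
    nlinarith [hBpos y hy.1]
  have : f 0 ≤ f c := hmono (left_mem_Icc.2 hc0.le) (right_mem_Icc.2 hc0.le) hc0.le
  rw [hf0] at this
  linarith
end

section
/- For every integer m ≥ 1 and every real x ≥ 0, the regularized lower incomplete Gamma function satisfies (1/(m-1)!) ∫_0^x t^{m-1} e^{-t} dt ≤ (1 - e^{-x})^m. -/
open MeasureTheory Set Real

lemma cont_int (n : ℕ) (a b : ℝ) :
    IntervalIntegrable (fun t : ℝ => t ^ n * Real.exp (-t)) volume a b :=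
  (Continuous.mul (continuous_pow n) (Real.continuous_exp.comp continuous_neg)).intervalIntegrable a b

lemma Q_parts (n : ℕ) (x : ℝ) :
    ∫ t in (0:ℝ)..x, t ^ (n+1) * Real.exp (-t)
      = -(x ^ (n+1) * Real.exp (-x)) + (n+1) * ∫ t in (0:ℝ)..x, t ^ n * Real.exp (-t) := by
  have h : ∀ t ∈ Set.uIcc (0:ℝ) x,
      HasDerivAt (fun t : ℝ => -(t ^ (n+1) * Real.exp (-t)))
        (t ^ (n+1) * Real.exp (-t) - (n+1) * (t ^ n * Real.exp (-t))) t := by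
    intro t _
    have h1 : HasDerivAt (fun t : ℝ => t ^ (n+1)) ((n+1) * t ^ n) t := by
      simpa using hasDerivAt_pow (n+1) t
    have h2 : HasDerivAt (fun t : ℝ => Real.exp (-t)) (-Real.exp (-t)) t := by
      simpa [Function.comp_def] using (Real.hasDerivAt_exp (-t)).comp t (hasDerivAt_neg t)
    have := (h1.fun_mul h2).fun_neg
    refine this.congr_deriv ?_
    ring
  have hint : IntervalIntegrable
      (fun t : ℝ => t ^ (n+1) * Real.exp (-t) - (n+1) * (t ^ n * Real.exp (-t))) volume 0 x :=
    (cont_int (n+1) 0 x).sub ((cont_int n 0 x).const_mul _)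
  have := intervalIntegral.integral_eq_sub_of_hasDerivAt h hint
  rw [intervalIntegral.integral_sub (cont_int (n+1) 0 x) ((cont_int n 0 x).const_mul _),
    intervalIntegral.integral_const_mul] at this
  simp at this
  linarith [this]

lemma Q_le (n : ℕ) (x : ℝ) (hx : 0 ≤ x) :
    ∫ t in (0:ℝ)..x, t ^ n * Real.exp (-t) ≤ x ^ (n+1) / (n+1) := by
  have h1 : ∫ t in (0:ℝ)..x, t ^ n * Real.exp (-t) ≤ ∫ t in (0:ℝ)..x, t ^ n := by
    apply intervalIntegral.integral_mono_on hx (cont_int n 0 x)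
      ((continuous_pow n).intervalIntegrable 0 x)
    intro t ht
    have ht0 : 0 ≤ t := ht.1
    have : Real.exp (-t) ≤ 1 := Real.exp_le_one_iff.mpr (by linarith)
    nlinarith [pow_nonneg ht0 n, Real.exp_pos (-t)]
  calc _ ≤ ∫ t in (0:ℝ)..x, t ^ n := h1
    _ = x ^ (n+1) / (n+1) := by rw [integral_pow]; simp

lemma Q_nonneg (n : ℕ) (x : ℝ) (hx : 0 ≤ x) :
    0 ≤ ∫ t in (0:ℝ)..x, t ^ n * Real.exp (-t) := by
  apply intervalIntegral.integral_nonneg hx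
  intro t ht
  exact mul_nonneg (pow_nonneg ht.1 n) (Real.exp_pos _).le

lemma Q_bound (n : ℕ) (x : ℝ) (hx : 0 ≤ x) :
    ∫ t in (0:ℝ)..x, t ^ n * Real.exp (-t)
      ≤ (Nat.factorial n : ℝ) * (1 - Real.exp (-x)) ^ (n+1) := by
  induction n with
  | zero =>
    have h : ∀ t ∈ Set.uIcc (0:ℝ) x,
        HasDerivAt (fun t : ℝ => -Real.exp (-t)) (t ^ 0 * Real.exp (-t)) t := by
      intro t _
      have h2 : HasDerivAt (fun t : ℝ => Real.exp (-t)) (-Real.exp (-t)) t := by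
        simpa [Function.comp_def] using (Real.hasDerivAt_exp (-t)).comp t (hasDerivAt_neg t)
      simpa using h2.fun_neg
    rw [intervalIntegral.integral_eq_sub_of_hasDerivAt h (cont_int 0 0 x)]
    simp [Nat.factorial]
  | succ n ih =>
    have hex : Real.exp (-x) ≤ 1 := Real.exp_le_one_iff.mpr (by linarith)
    have hex0 : (0:ℝ) ≤ Real.exp (-x) := (Real.exp_pos _).le
    have h1 : (1:ℝ) - Real.exp (-x) ≥ 0 := by linarith
    have hQle := Q_le n x hx
    have hQnn := Q_nonneg n x hx
    rw [Q_parts]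
    have key : (n+1 : ℝ) * ∫ t in (0:ℝ)..x, t ^ n * Real.exp (-t)
        = (n+1 : ℝ) * ((∫ t in (0:ℝ)..x, t ^ n * Real.exp (-t)) * (1 - Real.exp (-x))
          + Real.exp (-x) * (∫ t in (0:ℝ)..x, t ^ n * Real.exp (-t))) := by ring
    have hb1 : (∫ t in (0:ℝ)..x, t ^ n * Real.exp (-t)) * (1 - Real.exp (-x))
        ≤ (Nat.factorial n : ℝ) * (1 - Real.exp (-x)) ^ (n+1) * (1 - Real.exp (-x)) :=
      mul_le_mul_of_nonneg_right ih h1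
    have hb2 : Real.exp (-x) * (∫ t in (0:ℝ)..x, t ^ n * Real.exp (-t))
        ≤ Real.exp (-x) * (x ^ (n+1) / (n+1)) :=
      mul_le_mul_of_nonneg_left hQle hex0
    have hfac : (Nat.factorial (n+1) : ℝ) = (n+1) * Nat.factorial n := by
      rw [Nat.factorial_succ]; push_cast; ring
    have hpow : ((Nat.factorial n : ℝ) * (1 - Real.exp (-x)) ^ (n+1)) * (1 - Real.exp (-x))
        = (Nat.factorial n : ℝ) * (1 - Real.exp (-x)) ^ (n+2) := by ring
    have hn1 : (0:ℝ) < (n:ℝ) + 1 := by positivity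
    calc -(x ^ (n+1) * Real.exp (-x)) + (n+1 : ℝ) * ∫ t in (0:ℝ)..x, t ^ n * Real.exp (-t)
        ≤ -(x ^ (n+1) * Real.exp (-x)) + (n+1 : ℝ) *
          ((Nat.factorial n : ℝ) * (1 - Real.exp (-x)) ^ (n+1) * (1 - Real.exp (-x))
            + Real.exp (-x) * (x ^ (n+1) / (n+1))) := by
          rw [key]; nlinarith [hb1, hb2]
      _ = (Nat.factorial (n+1) : ℝ) * (1 - Real.exp (-x)) ^ (n+2) := by
          rw [hfac]
          field_simp
          ring
      _ = (Nat.factorial (n+1) : ℝ) * (1 - Real.exp (-x)) ^ (n+1+1) := by norm_num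

/-- Upper Alzer inequality for the regularized lower incomplete Gamma function: for an
integer `m ≥ 1` and `x ≥ 0`, `(1/(m-1)!) ∫_0^x t^{m-1} e^{-t} dt ≤ (1 - e^{-x})^m`. -/
theorem alzer_upper_bound
    (m : ℕ) (hm : 1 ≤ m) (x : ℝ) (hx : 0 ≤ x) :
    (1 / (Nat.factorial (m - 1) : ℝ)) * ∫ t in (0 : ℝ)..x, t ^ (m - 1) * Real.exp (-t)
      ≤ (1 - Real.exp (-x)) ^ m := by
  obtain ⟨n, rfl⟩ : ∃ n, m = n + 1 := ⟨m - 1, (Nat.succ_pred_eq_of_pos hm).symm⟩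
  simp only [Nat.add_sub_cancel]
  have h := Q_bound n x hx
  have hf : (0:ℝ) < (Nat.factorial n : ℝ) := by positivity
  rw [div_mul_eq_mul_div, one_mul, div_le_iff₀ hf]
  linarith [h]
end

section
/- Let (Ω, P) be a probability space, let m ≥ 1 be an integer, let H be a random variable with Gamma density m^m x^{m-1} e^{-mx}/(m-1)! on x > 0, and let I be a nonnegative random variable independent of H with Laplace transform L(s) = E[e^{-s I}]. Set b = m (m!)^{-1/m}. Then for all reals a > 0 and σ ≥ 0, ∑_{k=1}^{m} (-1)^{k+1} C(m,k) e^{-k m a σ} L(k m a) ≤ P(H ≥ a(I + σ)) ≤ ∑_{k=1}^{m} (-1)^{k+1} C(m,k) e^{-k b a σ} L(k b a). -/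
open MeasureTheory Set Real ProbabilityTheory

open Filter Topology


lemma monoHelper {f f' : ℝ → ℝ} {c : ℝ}
    (hd : ∀ x, c ≤ x → HasDerivAt f (f' x) x) (h' : ∀ x, c < x → 0 ≤ f' x) :
    MonotoneOn f (Ici c) := by
  apply monotoneOn_of_deriv_nonneg (convex_Ici c)
    (fun x hx => (hd x hx).continuousAt.continuousWithinAt)
  · intro x hx
    rw [interior_Ici] at hx
    exact (hd x hx.le).differentiableAt.differentiableWithinAt
  · intro x hx
    rw [interior_Ici] at hx
    rw [(hd x hx.le).deriv]
    exact h' x hx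

lemma antiHelper {f f' : ℝ → ℝ} {c : ℝ}
    (hd : ∀ x, c ≤ x → HasDerivAt f (f' x) x) (h' : ∀ x, c < x → f' x ≤ 0) :
    AntitoneOn f (Ici c) := by
  apply antitoneOn_of_deriv_nonpos (convex_Ici c)
    (fun x hx => (hd x hx).continuousAt.continuousWithinAt)
  · intro x hx
    rw [interior_Ici] at hx
    exact (hd x hx.le).differentiableAt.differentiableWithinAt
  · intro x hx
    rw [interior_Ici] at hx
    rw [(hd x hx.le).deriv]
    exact h' x hx

lemma sinh_ineq {u : ℝ} (hu : 0 ≤ u) : u * exp (u/2) ≤ exp u - 1 := by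
  have hhalf : ∀ x : ℝ, HasDerivAt (fun y : ℝ => exp (y/2)) (exp (x/2) * (1/2)) x := by
    intro x
    exact (Real.hasDerivAt_exp (x/2)).comp x ((hasDerivAt_id x).div_const 2)
  have key : MonotoneOn (fun u : ℝ => exp u - 1 - u * exp (u/2)) (Ici 0) := by
    apply monoHelper (f' := fun x => exp x - (1 * exp (x/2) + x * (exp (x/2) * (1/2))))
    · intro x _
      exact ((Real.hasDerivAt_exp x).sub_const 1).sub ((hasDerivAt_id x).mul (hhalf x))
    · intro x hx
      have h1 : 1 + x/2 ≤ exp (x/2) := by linarith [Real.add_one_le_exp (x/2)]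
      have h2 : exp (x/2) * exp (x/2) = exp x := by
        rw [← Real.exp_add]; ring_nf
      have h3 : exp (x/2) * (1 + x/2) ≤ exp (x/2) * exp (x/2) :=
        mul_le_mul_of_nonneg_left h1 (le_of_lt (exp_pos _))
      nlinarith [exp_pos (x/2)]
  have h := key (self_mem_Ici) (mem_Ici.mpr hu) hu
  simp only [Real.exp_zero] at h
  nlinarith

lemma sinh_sq {u : ℝ} (hu : 0 ≤ u) : u^2 * exp u ≤ (exp u - 1)^2 := by
  have h := sinh_ineq hu
  have h0 : 0 ≤ u * exp (u/2) := by positivity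
  have h2 : exp (u/2) * exp (u/2) = exp u := by rw [← Real.exp_add]; ring_nf
  nlinarith

lemma ratio_lemma {u v : ℝ} (hu : 0 < u) (huv : u ≤ v) :
    u * (1 - exp (-v)) ≤ v * (1 - exp (-u)) := by
  have hinner : ∀ x : ℝ, HasDerivAt (fun y : ℝ => exp (-y)) (-exp (-x)) x := by
    intro x
    simpa [Function.comp_def] using (Real.hasDerivAt_exp (-x)).comp x ((hasDerivAt_id x).neg)
  have key : MonotoneOn (fun v : ℝ => v * (1 - exp (-u)) - u * (1 - exp (-v))) (Ici u) := by
    apply monoHelper (f' := fun x => (1 - exp (-u)) - u * exp (-x))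
    · intro x _
      have h1 : HasDerivAt (fun v : ℝ => v * (1 - exp (-u))) (1 - exp (-u)) x := by
        simpa using (hasDerivAt_id x).mul_const (1 - exp (-u))
      have h2 : HasDerivAt (fun v : ℝ => u * (1 - exp (-v))) (u * exp (-x)) x := by
        have := ((hasDerivAt_const x (1:ℝ)).sub (hinner x)).const_mul u
        simpa using this
      exact h1.sub h2
    · intro x hx
      have h1 : u * exp (-u) ≤ 1 - exp (-u) := by
        have := Real.add_one_le_exp u
        have hpos := exp_pos (-u)
        have hmul : (u + 1) * exp (-u) ≤ exp u * exp (-u) :=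
          mul_le_mul_of_nonneg_right this (le_of_lt hpos)
        rw [← Real.exp_add] at hmul
        simp at hmul
        linarith
      have h2 : exp (-x) ≤ exp (-u) := exp_le_exp.mpr (by linarith)
      have h3 : u * exp (-x) ≤ u * exp (-u) := mul_le_mul_of_nonneg_left h2 hu.le
      linarith
  have h := key (self_mem_Ici) (mem_Ici.mpr huv) huv
  simp only at h
  nlinarith

noncomputable def qfun (u : ℝ) : ℝ := Real.log u - Real.log (1 - exp (-u))

lemma one_sub_exp_neg_pos {u : ℝ} (hu : 0 < u) : 0 < 1 - exp (-u) := by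
  have : exp (-u) < 1 := exp_lt_one_iff.mpr (by linarith)
  linarith

lemma expm1_pos {u : ℝ} (hu : 0 < u) : 0 < exp u - 1 := by
  have : (1:ℝ) < exp u := one_lt_exp_iff.mpr hu
  linarith

lemma q_mono {u v : ℝ} (hu : 0 < u) (huv : u ≤ v) : qfun u ≤ qfun v := by
  have hv : 0 < v := lt_of_lt_of_le hu huv
  have h1 := one_sub_exp_neg_pos hu
  have h2 := one_sub_exp_neg_pos hv
  have hr := ratio_lemma hu huv
  have hlog : Real.log (u * (1 - exp (-v))) ≤ Real.log (v * (1 - exp (-u))) :=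
    Real.log_le_log (by positivity) hr
  rw [Real.log_mul (ne_of_gt hu) (ne_of_gt h2), Real.log_mul (ne_of_gt hv) (ne_of_gt h1)] at hlog
  unfold qfun
  linarith


lemma hasDerivAt_exp_neg (x : ℝ) : HasDerivAt (fun y : ℝ => exp (-y)) (-exp (-x)) x := by
  simpa [Function.comp_def] using (Real.hasDerivAt_exp (-x)).comp x ((hasDerivAt_id x).neg)

lemma hasDerivAt_one_sub_exp_neg (x : ℝ) :
    HasDerivAt (fun y : ℝ => 1 - exp (-y)) (exp (-x)) x := by
  simpa [Pi.sub_def] using (hasDerivAt_const x (1:ℝ)).sub (hasDerivAt_exp_neg x)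

noncomputable def qd (u : ℝ) : ℝ := u⁻¹ - (exp u - 1)⁻¹

lemma hasDerivAt_q {u : ℝ} (hu : 0 < u) : HasDerivAt qfun (qd u) u := by
  have h1 : HasDerivAt (fun y : ℝ => Real.log y) u⁻¹ u := Real.hasDerivAt_log (ne_of_gt hu)
  have h2 : HasDerivAt (fun y : ℝ => Real.log (1 - exp (-y)))
      ((1 - exp (-u))⁻¹ * exp (-u)) u := by
    exact (Real.hasDerivAt_log (ne_of_gt (one_sub_exp_neg_pos hu))).comp u
      (hasDerivAt_one_sub_exp_neg u)
  have h3 : (1 - exp (-u))⁻¹ * exp (-u) = (exp u - 1)⁻¹ := by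
    rw [Real.exp_neg]
    have he : exp u ≠ 0 := ne_of_gt (exp_pos u)
    have h4 : exp u - 1 ≠ 0 := ne_of_gt (expm1_pos hu)
    field_simp
  have := h1.sub h2
  rw [h3] at this
  exact this

lemma qd_anti {u v : ℝ} (hu : 0 < u) (huv : u ≤ v) : qd v ≤ qd u := by
  have key : AntitoneOn qd (Ici u) := by
    apply antiHelper (f' := fun x => -(x^2)⁻¹ + exp x / (exp x - 1)^2)
    · intro x hx
      have hx0 : 0 < x := lt_of_lt_of_le hu hx
      have d1 : HasDerivAt (fun y : ℝ => y⁻¹) (-(x^2)⁻¹) x := hasDerivAt_inv (ne_of_gt hx0)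
      have d2 : HasDerivAt (fun y : ℝ => (exp y - 1)⁻¹) (-(exp x) / (exp x - 1)^2) x :=
        ((Real.hasDerivAt_exp x).sub_const 1).inv (ne_of_gt (expm1_pos hx0))
      have := d1.sub d2
      exact this.congr_deriv (by ring)
    · intro x hx
      have hx0 : 0 < x := lt_trans hu hx
      have hs := sinh_sq hx0.le
      have h1 : exp x / (exp x - 1)^2 ≤ (x^2)⁻¹ := by
        rw [div_le_iff₀ (pow_pos (expm1_pos hx0) 2), inv_mul_eq_div,
          le_div_iff₀ (by positivity : (0:ℝ) < x^2)]
        nlinarith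
      linarith
  exact key (mem_Ici.mpr le_rfl) (mem_Ici.mpr huv) huv

lemma tendsto_one_sub_exp_div : Tendsto (fun u : ℝ => (1 - exp (-u)) / u) (𝓝[>] (0:ℝ)) (𝓝 1) := by
  have hd : HasDerivAt (fun y : ℝ => 1 - exp (-y)) 1 0 := by
    simpa using hasDerivAt_one_sub_exp_neg 0
  have h1 := hasDerivAt_iff_tendsto_slope.mp hd
  have h2 : Tendsto (slope (fun y : ℝ => 1 - exp (-y)) 0) (𝓝[>] (0:ℝ)) (𝓝 1) :=
    h1.mono_left (nhdsWithin_mono 0 (fun x hx => ne_of_gt hx))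
  apply h2.congr'
  filter_upwards [self_mem_nhdsWithin] with u hu
  rw [slope_def_field]
  simp

lemma tendsto_q_zero : Tendsto qfun (𝓝[>] (0:ℝ)) (𝓝 0) := by
  have h2 : Tendsto (fun u : ℝ => Real.log ((1 - exp (-u)) / u)) (𝓝[>] (0:ℝ)) (𝓝 0) := by
    have := (Real.continuousAt_log one_ne_zero).tendsto.comp tendsto_one_sub_exp_div
    simpa [Real.log_one, Function.comp_def] using this
  have h3 := h2.neg
  rw [neg_zero] at h3
  apply h3.congr'
  filter_upwards [self_mem_nhdsWithin] with u hu
  rw [Real.log_div (ne_of_gt (one_sub_exp_neg_pos hu)) (ne_of_gt hu)]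
  unfold qfun
  ring

lemma tendsto_u_div_expm1 : Tendsto (fun u : ℝ => u / (exp u - 1)) (𝓝[>] (0:ℝ)) (𝓝 1) := by
  have hd : HasDerivAt Real.exp 1 0 := by simpa using Real.hasDerivAt_exp 0
  have h1 := hasDerivAt_iff_tendsto_slope.mp hd
  have h2 : Tendsto (slope Real.exp 0) (𝓝[>] (0:ℝ)) (𝓝 1) :=
    h1.mono_left (nhdsWithin_mono 0 (fun x hx => ne_of_gt hx))
  have h3 := h2.inv₀ one_ne_zero
  rw [inv_one] at h3
  apply h3.congr'
  filter_upwards [self_mem_nhdsWithin] with u hu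
  rw [slope_def_field]
  simp [Real.exp_zero, inv_div]

lemma q_ge {u : ℝ} (hu : 0 < u) : 1 - u / (exp u - 1) ≤ qfun u := by
  set e : ℝ → ℝ := fun y => qfun y + y / (exp y - 1) - 1 with he
  suffices h : 0 ≤ e u by
    simp only [he] at h; linarith
  have hderiv : ∀ x : ℝ, 0 < x → HasDerivAt e (x⁻¹ - x * exp x / (exp x - 1)^2) x := by
    intro x hx
    have d1 := hasDerivAt_q hx
    have d2 : HasDerivAt (fun y : ℝ => y / (exp y - 1))
        ((1 * (exp x - 1) - x * exp x) / (exp x - 1)^2) x :=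
      (hasDerivAt_id x).div ((Real.hasDerivAt_exp x).sub_const 1) (ne_of_gt (expm1_pos hx))
    have := (d1.add d2).sub_const 1
    refine this.congr_deriv ?_
    unfold qd
    have h4 : exp x - 1 ≠ 0 := ne_of_gt (expm1_pos hx)
    field_simp
    ring
  have hmono : ∀ t, 0 < t → t ≤ u → e t ≤ e u := by
    intro t ht htu
    have key : MonotoneOn e (Ici t) := by
      apply monoHelper (f' := fun x => x⁻¹ - x * exp x / (exp x - 1)^2)
      · exact fun x hx => hderiv x (lt_of_lt_of_le ht hx)
      · intro x hx
        have hx0 : 0 < x := lt_trans ht hx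
        have hs := sinh_sq hx0.le
        have h1 : x * exp x / (exp x - 1)^2 ≤ x⁻¹ := by
          rw [div_le_iff₀ (pow_pos (expm1_pos hx0) 2), inv_mul_eq_div,
            le_div_iff₀ (by positivity : (0:ℝ) < x)]
          nlinarith
        linarith
    exact key (mem_Ici.mpr le_rfl) (mem_Ici.mpr htu) htu
  have hev : ∀ᶠ t in 𝓝[>] (0:ℝ), e t ≤ e u := by
    filter_upwards [Ioc_mem_nhdsGT_of_mem (⟨le_rfl, hu⟩ : (0:ℝ) ∈ Ico 0 u)] with t ht
    exact hmono t ht.1 ht.2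
  have hlim : Tendsto e (𝓝[>] (0:ℝ)) (𝓝 0) := by
    have h1 := tendsto_q_zero.add tendsto_u_div_expm1
    have h2 := h1.sub_const 1
    norm_num at h2
    exact h2
  exact le_of_tendsto hlim hev

lemma q_anchor {u v : ℝ} (hu : 0 < u) (huv : u ≤ v) : u * qfun v ≤ v * qfun u := by
  have key : MonotoneOn (fun x => x * qfun u - u * qfun x) (Ici u) := by
    apply monoHelper (f' := fun x => qfun u - u * qd x)
    · intro x hx
      have hx0 : 0 < x := lt_of_lt_of_le hu hx
      have d1 : HasDerivAt (fun x : ℝ => x * qfun u) (qfun u) x := by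
        simpa using (hasDerivAt_id x).mul_const (qfun u)
      exact d1.sub ((hasDerivAt_q hx0).const_mul u)
    · intro x hx
      have hanti := qd_anti hu (le_of_lt hx)
      have h1 : u * qd x ≤ u * qd u := mul_le_mul_of_nonneg_left hanti hu.le
      have h2 : u * qd u = 1 - u / (exp u - 1) := by
        unfold qd
        rw [mul_sub, mul_inv_cancel₀ (ne_of_gt hu), div_eq_mul_inv]
      have h3 := q_ge hu
      linarith
  have h := key (mem_Ici.mpr le_rfl) (mem_Ici.mpr huv) huv
  simp only at h
  nlinarith
section Part3

noncomputable def Tail (m : ℕ) (τ : ℝ) : ℝ :=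
  ∑ j ∈ Finset.range m, Real.exp (-((m:ℝ) * τ)) * ((m:ℝ)*τ)^j / (Nat.factorial j : ℝ)

noncomputable def densR (m : ℕ) (τ : ℝ) : ℝ :=
  (m:ℝ) * Real.exp (-((m:ℝ)*τ)) * ((m:ℝ)*τ)^(m-1) / (Nat.factorial (m-1) : ℝ)

noncomputable def Rc (m : ℕ) (c : ℝ) (τ : ℝ) : ℝ :=
  (m:ℝ) * (1 - Real.exp (-(c*τ)))^(m-1) * (c * Real.exp (-(c*τ)))

lemma hasDerivAt_exp_neg_mul (c τ : ℝ) :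
    HasDerivAt (fun t : ℝ => Real.exp (-(c*t))) (-c * Real.exp (-(c*τ))) τ := by
  have h1 : HasDerivAt (fun t : ℝ => -(c*t)) (-c) τ := by
    simpa [Pi.neg_def] using ((hasDerivAt_id τ).const_mul c).neg
  have := (Real.hasDerivAt_exp (-(c*τ))).comp τ h1
  exact this.congr_deriv (by ring)

lemma hasDerivAt_partial (c : ℝ) (n : ℕ) (τ : ℝ) :
    HasDerivAt (fun t : ℝ => ∑ j ∈ Finset.range (n+1),
        Real.exp (-(c*t)) * (c*t)^j / (Nat.factorial j : ℝ))
      (-(c * Real.exp (-(c*τ)) * (c*τ)^n / (Nat.factorial n : ℝ))) τ := by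
  induction n with
  | zero =>
    have h : (fun t : ℝ => ∑ j ∈ Finset.range 1,
        Real.exp (-(c*t)) * (c*t)^j / (Nat.factorial j : ℝ)) = fun t => Real.exp (-(c*t)) := by
      funext t; simp
    rw [h]
    convert hasDerivAt_exp_neg_mul c τ using 1
    simp
  | succ n ih =>
    have h : (fun t : ℝ => ∑ j ∈ Finset.range (n+2),
        Real.exp (-(c*t)) * (c*t)^j / (Nat.factorial j : ℝ))
        = fun t => (∑ j ∈ Finset.range (n+1), Real.exp (-(c*t)) * (c*t)^j / (Nat.factorial j : ℝ))
          + Real.exp (-(c*t)) * (c*t)^(n+1) / (Nat.factorial (n+1) : ℝ) := by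
      funext t; rw [Finset.sum_range_succ]
    rw [h]
    have hP : HasDerivAt (fun t : ℝ => (c*t)^(n+1)) (((n+1 : ℕ):ℝ) * (c*τ)^n * c) τ := by
      have := ((hasDerivAt_id τ).const_mul c).pow (n+1)
      simpa [Pi.pow_def] using this
    have := ih.add (((hasDerivAt_exp_neg_mul c τ).mul hP).div_const (Nat.factorial (n+1) : ℝ))
    refine this.congr_deriv ?_
    have hfac : (Nat.factorial (n+1) : ℝ) = ((n:ℝ)+1) * (Nat.factorial n : ℝ) := by
      rw [Nat.factorial_succ]; push_cast; ring
    have hne : (Nat.factorial n : ℝ) ≠ 0 := Nat.cast_ne_zero.mpr (Nat.factorial_ne_zero n)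
    have hne1 : ((n:ℝ)+1) ≠ 0 := by positivity
    rw [hfac]
    field_simp
    push_cast
    ring

lemma hasDerivAt_Tail {m : ℕ} (hm : 1 ≤ m) (τ : ℝ) :
    HasDerivAt (Tail m) (-(densR m τ)) τ := by
  obtain ⟨n, rfl⟩ : ∃ n, m = n + 1 := ⟨m - 1, (Nat.succ_pred_eq_of_pos hm).symm⟩
  exact hasDerivAt_partial ((n+1:ℕ):ℝ) n τ

lemma hasDerivAt_Gc (m : ℕ) (c τ : ℝ) :
    HasDerivAt (fun t : ℝ => (1 - Real.exp (-(c*t)))^m) (Rc m c τ) τ := by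
  have h1 : HasDerivAt (fun t : ℝ => 1 - Real.exp (-(c*t))) (c * Real.exp (-(c*τ))) τ := by
    have := (hasDerivAt_const τ (1:ℝ)).sub (hasDerivAt_exp_neg_mul c τ)
    exact this.congr_deriv (by ring)
  exact h1.pow m

lemma Tail_zero {m : ℕ} (hm : 1 ≤ m) : Tail m 0 = 1 := by
  unfold Tail
  rw [Finset.sum_eq_single 0]
  · simp
  · intro j _ hj0
    simp [zero_pow hj0]
  · intro h
    exact absurd (Finset.mem_range.mpr hm) h

lemma Tail_nonneg {m : ℕ} {τ : ℝ} (hτ : 0 ≤ τ) : 0 ≤ Tail m τ := by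
  unfold Tail
  apply Finset.sum_nonneg
  intro j _
  have : (0:ℝ) ≤ (m:ℝ)*τ := by positivity
  positivity

lemma Tail_le_one {m : ℕ} {τ : ℝ} (hτ : 0 ≤ τ) : Tail m τ ≤ 1 := by
  have hMτ : (0:ℝ) ≤ (m:ℝ)*τ := by positivity
  have h1 : Tail m τ = Real.exp (-((m:ℝ)*τ)) * ∑ j ∈ Finset.range m, ((m:ℝ)*τ)^j / (Nat.factorial j : ℝ) := by
    unfold Tail
    rw [Finset.mul_sum]
    congr 1; funext j; ring
  rw [h1]
  have h2 := Real.sum_le_exp_of_nonneg hMτ m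
  have h3 : Real.exp (-((m:ℝ)*τ)) * (∑ j ∈ Finset.range m, ((m:ℝ)*τ)^j / (Nat.factorial j : ℝ))
      ≤ Real.exp (-((m:ℝ)*τ)) * Real.exp ((m:ℝ)*τ) :=
    mul_le_mul_of_nonneg_left h2 (le_of_lt (Real.exp_pos _))
  rw [← Real.exp_add] at h3
  simpa using h3

lemma tendsto_Tail (m : ℕ) (hm : 1 ≤ m) : Filter.Tendsto (Tail m) Filter.atTop (nhds 0) := by
  have hM : (0:ℝ) < m := by exact_mod_cast hm
  have hterm : ∀ j : ℕ, Filter.Tendsto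
      (fun τ : ℝ => Real.exp (-((m:ℝ)*τ)) * ((m:ℝ)*τ)^j / (Nat.factorial j : ℝ))
      Filter.atTop (nhds 0) := by
    intro j
    have h1 : Filter.Tendsto (fun τ : ℝ => (m:ℝ)*τ) Filter.atTop Filter.atTop :=
      Filter.Tendsto.const_mul_atTop hM Filter.tendsto_id
    have h2 := (tendsto_pow_mul_exp_neg_atTop_nhds_zero j).comp h1
    have h3 := h2.div_const (Nat.factorial j : ℝ)
    rw [zero_div] at h3
    apply h3.congr
    intro τ
    simp only [Function.comp_apply]
    ring
  have := tendsto_finset_sum (Finset.range m) (fun j _ => hterm j)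
  rw [Finset.sum_const_zero] at this
  exact this

lemma tendsto_Gc (m : ℕ) {c : ℝ} (hc : 0 < c) :
    Filter.Tendsto (fun τ : ℝ => (1 - Real.exp (-(c*τ)))^m) Filter.atTop (nhds 1) := by
  have h1 : Filter.Tendsto (fun τ : ℝ => -(c*τ)) Filter.atTop Filter.atBot := by
    apply Filter.tendsto_neg_atBot_iff.mpr
    exact Filter.Tendsto.const_mul_atTop hc Filter.tendsto_id
  have h2 := Real.tendsto_exp_atBot.comp h1
  have h3 : Filter.Tendsto (fun τ : ℝ => 1 - Real.exp (-(c*τ))) Filter.atTop (nhds 1) := by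
    have := Filter.Tendsto.sub (tendsto_const_nhds (x := (1:ℝ))) h2
    simpa using this
  have := h3.pow m
  simpa using this

lemma single_crossing {φ φ' : ℝ → ℝ} (hd : ∀ x, HasDerivAt φ (φ' x) x)
    (h0 : φ 0 = 0) (hlim : Filter.Tendsto φ Filter.atTop (nhds 0))
    (hprop : ∀ y t, 0 < y → y ≤ t → φ' y < 0 → φ' t ≤ 0) :
    ∀ x, 0 ≤ x → 0 ≤ φ x := by
  intro x hx
  by_cases hex : ∃ y, 0 < y ∧ y ≤ x ∧ φ' y < 0
  · obtain ⟨y, hy0, hyx, hy'⟩ := hex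
    have hanti : AntitoneOn φ (Ici x) :=
      antiHelper (fun t _ => hd t) (fun t ht => hprop y t hy0 (hyx.trans ht.le) hy')
    have hev : ∀ᶠ t in Filter.atTop, φ t ≤ φ x := by
      filter_upwards [Filter.eventually_ge_atTop x] with t ht
      exact hanti (mem_Ici.mpr le_rfl) (mem_Ici.mpr ht) ht
    exact le_of_tendsto hlim hev
  · push_neg at hex
    have hmono : MonotoneOn φ (Icc 0 x) := by
      apply monotoneOn_of_deriv_nonneg (convex_Icc 0 x)
        (fun t _ => (hd t).continuousAt.continuousWithinAt)
      · intro t _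
        exact (hd t).differentiableAt.differentiableWithinAt
      · intro t ht
        rw [interior_Icc] at ht
        rw [(hd t).deriv]
        exact hex t ht.1 ht.2.le
    have := hmono (left_mem_Icc.mpr hx) (right_mem_Icc.mpr hx) hx
    rwa [h0] at this

end Part3
section Part4

lemma densR_pos {m : ℕ} (hm : 1 ≤ m) {τ : ℝ} (hτ : 0 < τ) : 0 < densR m τ := by
  have hM : (0:ℝ) < m := by exact_mod_cast hm
  have hMτ : (0:ℝ) < (m:ℝ)*τ := mul_pos hM hτ
  have hf : (0:ℝ) < (Nat.factorial (m-1) : ℝ) := by exact_mod_cast Nat.factorial_pos _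
  exact div_pos (mul_pos (mul_pos hM (Real.exp_pos _)) (pow_pos hMτ _)) hf

lemma Rc_pos {m : ℕ} (hm : 1 ≤ m) {c τ : ℝ} (hc : 0 < c) (hτ : 0 < τ) : 0 < Rc m c τ := by
  have hM : (0:ℝ) < m := by exact_mod_cast hm
  exact mul_pos (mul_pos hM (pow_pos (one_sub_exp_neg_pos (mul_pos hc hτ)) _))
    (mul_pos hc (Real.exp_pos _))

lemma upper_sign (n : ℕ) {τ : ℝ} (hτ : 0 < τ) :
    (Rc (n+1) ((n+1:ℕ):ℝ) τ < densR (n+1) τ ↔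
      Real.log (Nat.factorial (n+1) : ℝ) < (n:ℝ) * qfun (((n+1:ℕ):ℝ)*τ)) := by
  have hM0 : (0:ℝ) < ((n+1:ℕ):ℝ) := by exact_mod_cast Nat.succ_pos n
  set M : ℝ := ((n+1:ℕ):ℝ) with hMdef
  have hMτ : 0 < M*τ := mul_pos hM0 hτ
  have hE : 0 < 1 - Real.exp (-(M*τ)) := one_sub_exp_neg_pos hMτ
  have hR : 0 < Rc (n+1) M τ := Rc_pos (by omega) hM0 hτ
  have hD : 0 < densR (n+1) τ := densR_pos (by omega) hτ
  have hfn : (0:ℝ) < (Nat.factorial n : ℝ) := by exact_mod_cast Nat.factorial_pos n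
  rw [← Real.log_lt_log_iff hR hD]
  have hlogR : Real.log (Rc (n+1) M τ) =
      Real.log M + (n:ℝ) * Real.log (1 - Real.exp (-(M*τ))) + (Real.log M + (-(M*τ))) := by
    show Real.log (((n+1:ℕ):ℝ) * (1 - Real.exp (-(M*τ)))^((n+1)-1) * (M * Real.exp (-(M*τ)))) = _
    rw [← hMdef, Nat.add_sub_cancel,
      Real.log_mul (by positivity) (by positivity),
      Real.log_mul (ne_of_gt hM0) (by positivity),
      Real.log_pow,
      Real.log_mul (ne_of_gt hM0) (ne_of_gt (Real.exp_pos _)),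
      Real.log_exp]
  have hlogD : Real.log (densR (n+1) τ) =
      Real.log M + (-(M*τ)) + (n:ℝ) * Real.log (M*τ) - Real.log (Nat.factorial n : ℝ) := by
    show Real.log (((n+1:ℕ):ℝ) * Real.exp (-(M*τ)) * (M*τ)^((n+1)-1) / (Nat.factorial ((n+1)-1) : ℝ)) = _
    rw [← hMdef, Nat.add_sub_cancel,
      Real.log_div (by positivity) (ne_of_gt hfn),
      Real.log_mul (by positivity) (by positivity),
      Real.log_mul (ne_of_gt hM0) (ne_of_gt (Real.exp_pos _)),
      Real.log_pow,
      Real.log_exp]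
  have hfact : Real.log (Nat.factorial (n+1) : ℝ) = Real.log M + Real.log (Nat.factorial n : ℝ) := by
    have h1 : (Nat.factorial (n+1) : ℝ) = M * (Nat.factorial n : ℝ) := by
      rw [hMdef]; push_cast [Nat.factorial_succ]; ring
    rw [h1, Real.log_mul (ne_of_gt hM0) (ne_of_gt hfn)]
  have hq : qfun (M*τ) = Real.log (M*τ) - Real.log (1 - Real.exp (-(M*τ))) := rfl
  rw [hlogR, hlogD, hfact, hq]
  constructor <;> intro h <;> (ring_nf at h ⊢) <;> linarith

lemma lower_sign (n : ℕ) {b : ℝ}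
    (hb : b = ((n+1:ℕ):ℝ) * (Nat.factorial (n+1) : ℝ) ^ (-(1:ℝ)/((n+1:ℕ):ℝ)))
    {τ : ℝ} (hτ : 0 < τ) :
    (densR (n+1) τ < Rc (n+1) b τ ↔
      (n:ℝ) * qfun (b*τ) < (((n+1:ℕ):ℝ) - b) * τ) := by
  have hM0 : (0:ℝ) < ((n+1:ℕ):ℝ) := by exact_mod_cast Nat.succ_pos n
  set M : ℝ := ((n+1:ℕ):ℝ) with hMdef
  have hfac0 : (0:ℝ) < (Nat.factorial (n+1) : ℝ) := by exact_mod_cast Nat.factorial_pos _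
  have hfn : (0:ℝ) < (Nat.factorial n : ℝ) := by exact_mod_cast Nat.factorial_pos n
  have hb0 : 0 < b := by
    rw [hb]; exact mul_pos hM0 (Real.rpow_pos_of_pos hfac0 _)
  have hbτ : 0 < b*τ := mul_pos hb0 hτ
  have hEb : 0 < 1 - Real.exp (-(b*τ)) := one_sub_exp_neg_pos hbτ
  have hMτ : 0 < M*τ := mul_pos hM0 hτ
  have hR : 0 < Rc (n+1) b τ := Rc_pos (by omega) hb0 hτ
  have hD : 0 < densR (n+1) τ := densR_pos (by omega) hτ
  rw [← Real.log_lt_log_iff hD hR]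
  have hlogR : Real.log (Rc (n+1) b τ) =
      Real.log M + (n:ℝ) * Real.log (1 - Real.exp (-(b*τ))) + (Real.log b + (-(b*τ))) := by
    show Real.log (((n+1:ℕ):ℝ) * (1 - Real.exp (-(b*τ)))^((n+1)-1) * (b * Real.exp (-(b*τ)))) = _
    rw [← hMdef, Nat.add_sub_cancel,
      Real.log_mul (by positivity) (by positivity),
      Real.log_mul (ne_of_gt hM0) (by positivity),
      Real.log_pow,
      Real.log_mul (ne_of_gt hb0) (ne_of_gt (Real.exp_pos _)),
      Real.log_exp]
  have hlogD : Real.log (densR (n+1) τ) =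
      Real.log M + (-(M*τ)) + (n:ℝ) * Real.log (M*τ) - Real.log (Nat.factorial n : ℝ) := by
    show Real.log (((n+1:ℕ):ℝ) * Real.exp (-(M*τ)) * (M*τ)^((n+1)-1) / (Nat.factorial ((n+1)-1) : ℝ)) = _
    rw [← hMdef, Nat.add_sub_cancel,
      Real.log_div (by positivity) (ne_of_gt hfn),
      Real.log_mul (by positivity) (by positivity),
      Real.log_mul (ne_of_gt hM0) (ne_of_gt (Real.exp_pos _)),
      Real.log_pow,
      Real.log_exp]
  have hlogb : Real.log b = Real.log M + (-(1:ℝ)/M) * Real.log (Nat.factorial (n+1) : ℝ) := by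
    rw [hb, Real.log_mul (ne_of_gt hM0) (ne_of_gt (Real.rpow_pos_of_pos hfac0 _)),
      Real.log_rpow hfac0]
  have hfact : Real.log (Nat.factorial (n+1) : ℝ) = Real.log M + Real.log (Nat.factorial n : ℝ) := by
    have h1 : (Nat.factorial (n+1) : ℝ) = M * (Nat.factorial n : ℝ) := by
      rw [hMdef]; push_cast [Nat.factorial_succ]; ring
    rw [h1, Real.log_mul (ne_of_gt hM0) (ne_of_gt hfn)]
  have hMn : M = (n:ℝ)+1 := by rw [hMdef]; push_cast; ring
  have hkey : ((n:ℝ)+1) * Real.log b = (n:ℝ) * Real.log M - Real.log (Nat.factorial n : ℝ) := by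
    rw [hlogb, hfact]
    rw [hMn]
    have : ((n:ℝ)+1) ≠ 0 := by positivity
    field_simp
    ring
  have hlMτ : Real.log (M*τ) = Real.log M + Real.log τ :=
    Real.log_mul (ne_of_gt hM0) (ne_of_gt hτ)
  have hlbτ : Real.log (b*τ) = Real.log b + Real.log τ :=
    Real.log_mul (ne_of_gt hb0) (ne_of_gt hτ)
  have hq : qfun (b*τ) = Real.log (b*τ) - Real.log (1 - Real.exp (-(b*τ))) := rfl
  rw [hlogR, hlogD, hq, hlbτ, hlMτ]
  have hkey' := hkey
  constructor <;> intro h <;> (ring_nf at h hkey' ⊢) <;> nlinarith [hkey']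

end Part4
section Part5

lemma alzer_lower {m : ℕ} (hm : 1 ≤ m) {τ : ℝ} (hτ : 0 ≤ τ) :
    1 - (1 - Real.exp (-((m:ℝ)*τ)))^m ≤ Tail m τ := by
  obtain ⟨n, rfl⟩ : ∃ n, m = n + 1 := ⟨m - 1, (Nat.succ_pred_eq_of_pos hm).symm⟩
  have hm1 : 1 ≤ n + 1 := Nat.succ_le_succ (Nat.zero_le n)
  have hM0 : (0:ℝ) < ((n+1:ℕ):ℝ) := by exact_mod_cast Nat.succ_pos n
  have hd : ∀ x, HasDerivAt
      (fun t => (1 - Real.exp (-(((n+1:ℕ):ℝ)*t)))^(n+1) - 1 + Tail (n+1) t)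
      (Rc (n+1) ((n+1:ℕ):ℝ) x - densR (n+1) x) x := by
    intro x
    have h1 := ((hasDerivAt_Gc (n+1) ((n+1:ℕ):ℝ) x).sub_const 1).add
      (hasDerivAt_Tail (m := n+1) hm1 x)
    exact h1.congr_deriv (by ring)
  have h0 : (fun t => (1 - Real.exp (-(((n+1:ℕ):ℝ)*t)))^(n+1) - 1 + Tail (n+1) t) 0 = 0 := by
    simp [Tail_zero hm1]
  have hlim : Filter.Tendsto
      (fun t => (1 - Real.exp (-(((n+1:ℕ):ℝ)*t)))^(n+1) - 1 + Tail (n+1) t)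
      Filter.atTop (nhds 0) := by
    have h1 := ((tendsto_Gc (n+1) hM0).sub_const 1).add (tendsto_Tail (n+1) hm1)
    rw [show (1:ℝ) - 1 + 0 = 0 by norm_num] at h1
    exact h1
  have hprop : ∀ y t, 0 < y → y ≤ t →
      Rc (n+1) ((n+1:ℕ):ℝ) y - densR (n+1) y < 0 →
      Rc (n+1) ((n+1:ℕ):ℝ) t - densR (n+1) t ≤ 0 := by
    intro y t hy hyt hneg
    have ht0 : 0 < t := lt_of_lt_of_le hy hyt
    have h1 : Rc (n+1) ((n+1:ℕ):ℝ) y < densR (n+1) y := by linarith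
    have h2 := (upper_sign n hy).mp h1
    have h3 : qfun (((n+1:ℕ):ℝ)*y) ≤ qfun (((n+1:ℕ):ℝ)*t) :=
      q_mono (mul_pos hM0 hy) (mul_le_mul_of_nonneg_left hyt hM0.le)
    have h4 : (n:ℝ) * qfun (((n+1:ℕ):ℝ)*y) ≤ (n:ℝ) * qfun (((n+1:ℕ):ℝ)*t) :=
      mul_le_mul_of_nonneg_left h3 (Nat.cast_nonneg n)
    have h5 := (upper_sign n ht0).mpr (lt_of_lt_of_le h2 h4)
    linarith
  have hfin := single_crossing hd h0 hlim hprop τ hτ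
  linarith

lemma alzer_upper {m : ℕ} (hm : 1 ≤ m) {b : ℝ}
    (hb : b = (m:ℝ) * (Nat.factorial m : ℝ) ^ (-(1:ℝ)/(m:ℝ)))
    {τ : ℝ} (hτ : 0 ≤ τ) :
    Tail m τ ≤ 1 - (1 - Real.exp (-(b*τ)))^m := by
  obtain ⟨n, rfl⟩ : ∃ n, m = n + 1 := ⟨m - 1, (Nat.succ_pred_eq_of_pos hm).symm⟩
  have hm1 : 1 ≤ n + 1 := Nat.succ_le_succ (Nat.zero_le n)
  have hM0 : (0:ℝ) < ((n+1:ℕ):ℝ) := by exact_mod_cast Nat.succ_pos n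
  have hfac0 : (0:ℝ) < (Nat.factorial (n+1) : ℝ) := by exact_mod_cast Nat.factorial_pos _
  have hb0 : 0 < b := by
    rw [hb]; exact mul_pos hM0 (Real.rpow_pos_of_pos hfac0 _)
  have hd : ∀ x, HasDerivAt
      (fun t => 1 - (1 - Real.exp (-(b*t)))^(n+1) - Tail (n+1) t)
      (densR (n+1) x - Rc (n+1) b x) x := by
    intro x
    have h1 := ((hasDerivAt_const x (1:ℝ)).sub (hasDerivAt_Gc (n+1) b x)).sub
      (hasDerivAt_Tail (m := n+1) hm1 x)
    exact h1.congr_deriv (by ring)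
  have h0 : (fun t => 1 - (1 - Real.exp (-(b*t)))^(n+1) - Tail (n+1) t) 0 = 0 := by
    simp [Tail_zero hm1]
  have hlim : Filter.Tendsto
      (fun t => 1 - (1 - Real.exp (-(b*t)))^(n+1) - Tail (n+1) t)
      Filter.atTop (nhds 0) := by
    have h1 := ((tendsto_const_nhds (x := (1:ℝ))).sub (tendsto_Gc (n+1) hb0)).sub
      (tendsto_Tail (n+1) hm1)
    rw [show (1:ℝ) - 1 - 0 = 0 by norm_num] at h1
    exact h1
  have hprop : ∀ y t, 0 < y → y ≤ t →
      densR (n+1) y - Rc (n+1) b y < 0 →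
      densR (n+1) t - Rc (n+1) b t ≤ 0 := by
    intro y t hy hyt hneg
    have ht0 : 0 < t := lt_of_lt_of_le hy hyt
    have h1 : densR (n+1) y < Rc (n+1) b y := by linarith
    have h2 := (lower_sign n hb hy).mp h1
    have h6 : (b*y) * qfun (b*t) ≤ (b*t) * qfun (b*y) :=
      q_anchor (mul_pos hb0 hy) (mul_le_mul_of_nonneg_left hyt hb0.le)
    have h7 : b * (y * qfun (b*t)) ≤ b * (t * qfun (b*y)) := by linarith
    have h7' : y * qfun (b*t) ≤ t * qfun (b*y) := (mul_le_mul_iff_right₀ hb0).mp h7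
    have h8 : (n:ℝ) * (y * qfun (b*t)) ≤ (n:ℝ) * (t * qfun (b*y)) :=
      mul_le_mul_of_nonneg_left h7' (Nat.cast_nonneg n)
    have h9 : t * ((n:ℝ) * qfun (b*y)) < t * ((((n+1:ℕ):ℝ) - b) * y) :=
      mul_lt_mul_of_pos_left h2 ht0
    have h10 : y * ((n:ℝ) * qfun (b*t)) < y * ((((n+1:ℕ):ℝ) - b) * t) := by nlinarith
    have h11 : (n:ℝ) * qfun (b*t) < (((n+1:ℕ):ℝ) - b) * t :=
      lt_of_mul_lt_mul_left h10 hy.le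
    have h12 := (lower_sign n hb ht0).mpr h11
    linarith
  have hfin := single_crossing hd h0 hlim hprop τ hτ
  linarith

end Part5
section Part6


lemma continuous_Tail (m : ℕ) : Continuous (Tail m) := by
  unfold Tail
  apply continuous_finset_sum
  intro j _
  apply Continuous.div_const
  exact (Real.continuous_exp.comp (Continuous.neg (continuous_const.mul continuous_id))).mul
    ((continuous_const.mul continuous_id).pow j)

lemma continuous_densR (m : ℕ) : Continuous (densR m) := by
  unfold densR
  apply Continuous.div_const
  exact ((continuous_const.mul (Real.continuous_exp.comp
    (Continuous.neg (continuous_const.mul continuous_id)))).mul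
    ((continuous_const.mul continuous_id).pow (m-1)))

lemma densR_integrableOn {m : ℕ} (hm : 1 ≤ m) {τ : ℝ} (hτ : 0 ≤ τ) :
    IntegrableOn (densR m) (Ioi τ) := by
  have hM : (0:ℝ) < m := by exact_mod_cast hm
  have hint : IntegrableOn (fun x : ℝ => (m:ℝ) * 2^(m-1) * Real.exp (-((m:ℝ)/2) * x)) (Ioi τ) :=
    (exp_neg_integrableOn_Ioi τ (by positivity : (0:ℝ) < (m:ℝ)/2)).const_mul _
  apply Integrable.mono' hint (continuous_densR m).aestronglyMeasurable
  rw [ae_restrict_iff' measurableSet_Ioi]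
  apply Filter.Eventually.of_forall
  intro x hx
  have hx0 : 0 < x := lt_of_le_of_lt hτ hx
  have hMx : (0:ℝ) < (m:ℝ)*x := by positivity
  rw [Real.norm_eq_abs, abs_of_nonneg (le_of_lt (densR_pos hm hx0))]
  have key : ((m:ℝ)*x/2)^(m-1) / (Nat.factorial (m-1) : ℝ) ≤ Real.exp ((m:ℝ)*x/2) := by
    have h1 := Real.sum_le_exp_of_nonneg (by positivity : (0:ℝ) ≤ (m:ℝ)*x/2) m
    have h2 : ((m:ℝ)*x/2)^(m-1) / (Nat.factorial (m-1):ℝ) ≤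
        ∑ i ∈ Finset.range m, ((m:ℝ)*x/2)^i / (Nat.factorial i : ℝ) := by
      apply Finset.single_le_sum (f := fun i => ((m:ℝ)*x/2)^i / (Nat.factorial i:ℝ))
        (fun i _ => by positivity)
      exact Finset.mem_range.mpr (by omega)
    linarith
  have e1 : ((m:ℝ)*x)^(m-1) = 2^(m-1) * ((m:ℝ)*x/2)^(m-1) := by
    rw [show (m:ℝ)*x = 2*((m:ℝ)*x/2) by ring, mul_pow]
    ring_nf
  have e2 : Real.exp (-((m:ℝ)*x)) * Real.exp ((m:ℝ)*x/2) = Real.exp (-((m:ℝ)/2) * x) := by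
    rw [← Real.exp_add]; congr 1; ring
  show (m:ℝ) * Real.exp (-((m:ℝ)*x)) * ((m:ℝ)*x)^(m-1) / (Nat.factorial (m-1):ℝ)
    ≤ (m:ℝ) * 2^(m-1) * Real.exp (-((m:ℝ)/2) * x)
  calc (m:ℝ) * Real.exp (-((m:ℝ)*x)) * ((m:ℝ)*x)^(m-1) / (Nat.factorial (m-1):ℝ)
      = (m:ℝ) * 2^(m-1) * (Real.exp (-((m:ℝ)*x)) * (((m:ℝ)*x/2)^(m-1) / (Nat.factorial (m-1):ℝ))) := by
        rw [e1]; ring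
    _ ≤ (m:ℝ) * 2^(m-1) * (Real.exp (-((m:ℝ)*x)) * Real.exp ((m:ℝ)*x/2)) := by
        apply mul_le_mul_of_nonneg_left _ (by positivity)
        exact mul_le_mul_of_nonneg_left key (le_of_lt (Real.exp_pos _))
    _ = (m:ℝ) * 2^(m-1) * Real.exp (-((m:ℝ)/2) * x) := by rw [e2]

lemma tail_integral {m : ℕ} (hm : 1 ≤ m) {τ : ℝ} (hτ : 0 ≤ τ) :
    ∫ x in Ioi τ, densR m x = Tail m τ := by
  have h := integral_Ioi_of_hasDerivAt_of_tendsto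
    (f := fun x => -Tail m x) (f' := densR m) (a := τ) (m := 0)
    ((hasDerivAt_Tail hm τ).neg.continuousAt.continuousWithinAt)
    (fun x _ => by simpa [Pi.neg_def] using (hasDerivAt_Tail hm x).neg)
    (densR_integrableOn hm hτ)
    (by simpa using (tendsto_Tail m hm).neg)
  rw [h]; simp

lemma law_Ici {m : ℕ} (hm : 1 ≤ m) {τ : ℝ} (hτ : 0 ≤ τ) :
    (volume.withDensity (fun x => ENNReal.ofReal (nakagamiGammaPdf m x))) (Ici τ)
      = ENNReal.ofReal (Tail m τ) := by
  rw [withDensity_apply _ measurableSet_Ici]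
  rw [setLIntegral_congr (Ioi_ae_eq_Ici (a := τ)).symm]
  have h2 : ∫⁻ x in Ioi τ, ENNReal.ofReal (nakagamiGammaPdf m x)
      = ∫⁻ x in Ioi τ, ENNReal.ofReal (densR m x) := by
    apply setLIntegral_congr_fun measurableSet_Ioi
    intro x hx
    have hx0 : 0 < x := lt_of_le_of_lt hτ hx
    beta_reduce
    congr 1
    unfold nakagamiGammaPdf densR
    rw [if_pos hx0]
    have hMm : (m:ℝ)^m = (m:ℝ) * (m:ℝ)^(m-1) := by
      obtain ⟨n, rfl⟩ : ∃ n, m = n+1 := ⟨m-1, (Nat.succ_pred_eq_of_pos hm).symm⟩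
      rw [pow_succ, Nat.add_sub_cancel]
      ring
    rw [hMm, mul_pow]
    simp only [neg_mul]
    ring
  rw [h2, ← ofReal_integral_eq_lintegral_ofReal (densR_integrableOn hm hτ)
    ((ae_restrict_iff' measurableSet_Ioi).2 (Filter.Eventually.of_forall
      (fun x hx => (densR_pos hm (lt_of_le_of_lt hτ hx)).le))),
    tail_integral hm hτ]

lemma binom_expand (m : ℕ) (hm : 1 ≤ m) (u : ℝ) :
    1 - (1 - u)^m = ∑ k ∈ Finset.Icc 1 m, (-1:ℝ)^(k+1) * (m.choose k : ℝ) * u^k := by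
  have h1 : (1 - u)^m = ∑ k ∈ Finset.range (m+1), (-u)^k * (m.choose k : ℝ) := by
    have h := add_pow (-u) 1 m
    simp only [one_pow, mul_one] at h
    rw [show (1:ℝ) - u = -u + 1 by ring, h]
  have hins : Finset.range (m+1) = insert 0 (Finset.Icc 1 m) := by
    ext k
    simp only [Finset.mem_range, Finset.mem_insert, Finset.mem_Icc]
    omega
  rw [h1, hins, Finset.sum_insert (by simp)]
  simp only [pow_zero, one_mul, Nat.choose_zero_right, Nat.cast_one]
  rw [show ∀ S : ℝ, 1 - (1 + S) = -S by intro S; ring]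
  rw [← Finset.sum_neg_distrib]
  apply Finset.sum_congr rfl
  intro k _
  rw [neg_pow]
  ring

end Part6

/-- Two-sided Alzer bounds on the coverage probability: if `H` is Gamma with shape `m`
and rate `m`, `I ≥ 0` is independent of `H` with Laplace transform `L`, and
`b = m (m!)^{-1/m}`, then for `a > 0` and `σ ≥ 0`,
`∑_{k=1}^{m} (-1)^{k+1} C(m,k) e^{-k m a σ} L(k m a) ≤ P(H ≥ a(I+σ))
  ≤ ∑_{k=1}^{m} (-1)^{k+1} C(m,k) e^{-k b a σ} L(k b a)`. -/
theorem coverage_probability_alzer_bounds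
    {Ω : Type*} [MeasurableSpace Ω] (P : Measure Ω) [IsProbabilityMeasure P]
    (m : ℕ) (hm : 1 ≤ m)
    (H I : Ω → ℝ) (hH : Measurable H) (hI : Measurable I)
    (hHlaw : P.map H = volume.withDensity (fun x => ENNReal.ofReal (nakagamiGammaPdf m x)))
    (hI0 : ∀ ω, 0 ≤ I ω) (hindep : IndepFun H I P)
    (L : ℝ → ℝ) (hL : ∀ s : ℝ, L s = ∫ ω, Real.exp (-s * I ω) ∂P)
    (b : ℝ) (hb : b = (m : ℝ) * (Nat.factorial m : ℝ) ^ (-(1 : ℝ) / (m : ℝ)))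
    (a σ : ℝ) (ha : 0 < a) (hσ : 0 ≤ σ) :
    (∑ k ∈ Finset.Icc 1 m,
        (-1 : ℝ) ^ (k + 1) * (m.choose k : ℝ) * Real.exp (-(k : ℝ) * ((m : ℝ) * a) * σ)
          * L ((k : ℝ) * ((m : ℝ) * a)))
      ≤ (P {ω | a * (I ω + σ) ≤ H ω}).toReal ∧
    (P {ω | a * (I ω + σ) ≤ H ω}).toReal
      ≤ ∑ k ∈ Finset.Icc 1 m,
          (-1 : ℝ) ^ (k + 1) * (m.choose k : ℝ) * Real.exp (-(k : ℝ) * (b * a) * σ)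
            * L ((k : ℝ) * (b * a)) := by
  have hM0 : (0:ℝ) < (m:ℝ) := by exact_mod_cast hm
  have hfac0 : (0:ℝ) < (Nat.factorial m : ℝ) := by exact_mod_cast Nat.factorial_pos m
  have hb0 : 0 < b := by rw [hb]; exact mul_pos hM0 (Real.rpow_pos_of_pos hfac0 _)
  haveI hPH : IsProbabilityMeasure (P.map H) := Measure.isProbabilityMeasure_map hH.aemeasurable
  haveI hPI : IsProbabilityMeasure (P.map I) := Measure.isProbabilityMeasure_map hI.aemeasurable
  have hae : ∀ᵐ y ∂(P.map I), 0 ≤ y :=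
    (ae_map_iff hI.aemeasurable (measurableSet_le measurable_const measurable_id)).mpr
      (Filter.Eventually.of_forall hI0)
  have hUmeas : MeasurableSet {p : ℝ × ℝ | a * (p.2 + σ) ≤ p.1} :=
    measurableSet_le (by fun_prop) (by fun_prop)
  have hPS : P {ω | a * (I ω + σ) ≤ H ω}
      = ∫⁻ y, (P.map H) (Ici (a * (y + σ))) ∂(P.map I) := by
    have h0 : {ω | a * (I ω + σ) ≤ H ω}
        = (fun ω => (H ω, I ω)) ⁻¹' {p : ℝ × ℝ | a * (p.2 + σ) ≤ p.1} := rfl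
    rw [h0, ← Measure.map_apply (hH.prodMk hI) hUmeas,
      (indepFun_iff_map_prod_eq_prod_map_map hH.aemeasurable hI.aemeasurable).mp hindep,
      Measure.prod_apply_symm hUmeas]
    apply lintegral_congr
    intro y
    rfl
  have hPS2 : P {ω | a * (I ω + σ) ≤ H ω}
      = ∫⁻ y, ENNReal.ofReal (Tail m (a * (y + σ))) ∂(P.map I) := by
    rw [hPS]
    apply lintegral_congr_ae
    filter_upwards [hae] with y hy
    rw [hHlaw]
    exact law_Ici hm (mul_nonneg ha.le (add_nonneg hy hσ))
  have hTae : AEStronglyMeasurable (fun y => Tail m (a * (y + σ))) (P.map I) :=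
    ((continuous_Tail m).comp (by fun_prop : Continuous (fun y : ℝ => a*(y+σ)))).aestronglyMeasurable
  have hTnn : 0 ≤ᶠ[ae (P.map I)] (fun y => Tail m (a * (y + σ))) := by
    filter_upwards [hae] with y hy
    exact Tail_nonneg (mul_nonneg ha.le (add_nonneg hy hσ))
  have hPSr : (P {ω | a * (I ω + σ) ≤ H ω}).toReal = ∫ y, Tail m (a * (y + σ)) ∂(P.map I) := by
    rw [hPS2]
    exact (integral_eq_lintegral_of_nonneg_ae hTnn hTae).symm
  have hint_T : Integrable (fun y => Tail m (a * (y + σ))) (P.map I) := by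
    apply Integrable.mono' (integrable_const (1:ℝ)) hTae
    filter_upwards [hae] with y hy
    have h0 := Tail_nonneg (m := m) (mul_nonneg ha.le (add_nonneg hy hσ))
    have h1 := Tail_le_one (m := m) (mul_nonneg ha.le (add_nonneg hy hσ))
    rw [Real.norm_eq_abs, abs_of_nonneg h0]
    exact h1
  have hint_W : ∀ c : ℝ, 0 < c →
      Integrable (fun y => 1 - (1 - Real.exp (-(c*(y+σ))))^m) (P.map I) := by
    intro c hc
    apply Integrable.mono' (integrable_const (1:ℝ))
    · exact (by fun_prop : Continuous
        (fun y : ℝ => 1 - (1 - Real.exp (-(c*(y+σ))))^m)).aestronglyMeasurable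
    · filter_upwards [hae] with y hy
      have harg : -(c*(y+σ)) ≤ 0 := by
        have : 0 ≤ c*(y+σ) := mul_nonneg hc.le (add_nonneg hy hσ)
        linarith
      have hu1 : Real.exp (-(c*(y+σ))) ≤ 1 := Real.exp_le_one_iff.mpr harg
      have hu0 : 0 < Real.exp (-(c*(y+σ))) := Real.exp_pos _
      have hp0 : 0 ≤ (1 - Real.exp (-(c*(y+σ))))^m := pow_nonneg (by linarith) m
      have hp1 : (1 - Real.exp (-(c*(y+σ))))^m ≤ 1 := pow_le_one₀ (by linarith) (by linarith)
      rw [Real.norm_eq_abs, abs_of_nonneg (by linarith)]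
      linarith
  have hint_E : ∀ s : ℝ, 0 ≤ s → Integrable (fun y => Real.exp (-s*y)) (P.map I) := by
    intro s hs
    apply Integrable.mono' (integrable_const (1:ℝ))
    · exact (Real.continuous_exp.comp (continuous_const.mul continuous_id)).aestronglyMeasurable
    · filter_upwards [hae] with y hy
      rw [Real.norm_eq_abs, abs_of_pos (Real.exp_pos _)]
      apply Real.exp_le_one_iff.mpr
      have : 0 ≤ s * y := mul_nonneg hs hy
      linarith
  have hLmap : ∀ s : ℝ, ∫ y, Real.exp (-s*y) ∂(P.map I) = L s := by
    intro s
    rw [hL s]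
    exact integral_map hI.aemeasurable
      (Real.continuous_exp.comp (continuous_const.mul continuous_id)).aestronglyMeasurable
  have hsum : ∀ c : ℝ, 0 < c → ∫ y, (1 - (1 - Real.exp (-(c*(y+σ))))^m) ∂(P.map I)
      = ∑ k ∈ Finset.Icc 1 m,
          (-1:ℝ)^(k+1) * (m.choose k : ℝ) * Real.exp (-(k:ℝ)*c*σ) * L ((k:ℝ)*c) := by
    intro c hc
    have hptw : (fun y : ℝ => 1 - (1 - Real.exp (-(c*(y+σ))))^m)
        = fun y => ∑ k ∈ Finset.Icc 1 m,
          ((-1:ℝ)^(k+1) * (m.choose k : ℝ) * Real.exp (-(k:ℝ)*c*σ)) * Real.exp (-((k:ℝ)*c)*y) := by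
      funext y
      rw [binom_expand m hm]
      apply Finset.sum_congr rfl
      intro k _
      have h2 : Real.exp (-(c*(y+σ)))^k = Real.exp (-(k:ℝ)*c*σ) * Real.exp (-((k:ℝ)*c)*y) := by
        rw [← Real.exp_nat_mul, ← Real.exp_add]
        congr 1
        ring
      rw [h2]
      ring
    rw [hptw, integral_finset_sum]
    · apply Finset.sum_congr rfl
      intro k _
      rw [MeasureTheory.integral_const_mul, hLmap ((k:ℝ)*c)]
    · intro k _
      exact (hint_E ((k:ℝ)*c) (by positivity)).const_mul _
  constructor
  · have heq := hsum ((m:ℝ)*a) (by positivity)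
    have hle : ∫ y, (1 - (1 - Real.exp (-(((m:ℝ)*a)*(y+σ))))^m) ∂(P.map I)
        ≤ ∫ y, Tail m (a*(y+σ)) ∂(P.map I) := by
      apply integral_mono_ae (hint_W _ (by positivity)) hint_T
      filter_upwards [hae] with y hy
      have h := alzer_lower hm (τ := a*(y+σ)) (mul_nonneg ha.le (add_nonneg hy hσ))
      rw [show ((m:ℝ)*a)*(y+σ) = (m:ℝ)*(a*(y+σ)) by ring]
      exact h
    rw [hPSr]
    exact le_trans (le_of_eq heq.symm) hle
  · have heq := hsum (b*a) (mul_pos hb0 ha)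
    have hge : ∫ y, Tail m (a*(y+σ)) ∂(P.map I)
        ≤ ∫ y, (1 - (1 - Real.exp (-((b*a)*(y+σ))))^m) ∂(P.map I) := by
      apply integral_mono_ae hint_T (hint_W _ (mul_pos hb0 ha))
      filter_upwards [hae] with y hy
      have h := alzer_upper hm hb (τ := a*(y+σ)) (mul_nonneg ha.le (add_nonneg hy hσ))
      rw [show (b*a)*(y+σ) = b*(a*(y+σ)) by ring]
      exact h
    rw [hPSr]
    exact le_trans hge (le_of_eq heq)
end

section
/- Let (Ω, P) be a probability space, m ≥ 1 an integer, H a random variable with Gamma density m^m x^{m-1} e^{-mx}/(m-1)! on x > 0, and I a nonnegative random variable independent of H with Laplace transform L(s) = E[e^{-s I}]. Let a_m, a_n, ε_f, ε_t, c, σ be positive reals with a_m - a_n ε_f > 0 and a_n - β a_m ε_t > 0, where β ≥ 0, and set ε* = max{ ε_f/(a_m - a_n ε_f), ε_t/(a_n - β a_m ε_t) }. Then P( a_m c H/(a_n c H + I + σ) > ε_f and a_n c H/(I + σ + β a_m c H) > ε_t ) = ∑_{k=0}^{m-1} ∑_{p=0}^{k} C(k,p) · ((m ε*/c)^k / k!)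 · σ^p · e^{-(m ε* σ)/c} · (-1)^{k-p} · L^{(k-p)}(m ε*/c), where L^{(j)} denotes the j-th iterated derivative of L. -/
open MeasureTheory Set Real ProbabilityTheory

section Helpers
open Filter Finset


lemma pow_mul_exp_le' {x s : ℝ} (hx : 0 ≤ x) (hs : 0 < s) (j : ℕ) :
    x ^ j * Real.exp (-s * x) ≤ (j.factorial : ℝ) / s ^ j := by
  have h1 : (s * x) ^ j / j.factorial ≤ Real.exp (s * x) :=
    Real.pow_div_factorial_le_exp (x := s*x) (by positivity) j
  have h2 : (s * x) ^ j / j.factorial * Real.exp (-(s * x)) ≤ 1 := by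
    calc (s * x) ^ j / j.factorial * Real.exp (-(s * x))
        ≤ Real.exp (s * x) * Real.exp (-(s * x)) :=
          mul_le_mul_of_nonneg_right h1 (Real.exp_pos _).le
      _ = 1 := by rw [← Real.exp_add]; simp
  have hfac : (0:ℝ) < j.factorial := by positivity
  have hsj : (0:ℝ) < s ^ j := by positivity
  have key : x ^ j * Real.exp (-s * x) = (j.factorial / s ^ j) *
      ((s * x) ^ j / j.factorial * Real.exp (-(s * x))) := by
    rw [mul_pow]; field_simp
  rw [key]
  calc (j.factorial / s ^ j : ℝ) * ((s * x) ^ j / j.factorial * Real.exp (-(s * x)))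
      ≤ (j.factorial / s ^ j) * 1 := by
        apply mul_le_mul_of_nonneg_left h2 (by positivity)
    _ = j.factorial / s ^ j := mul_one _



noncomputable def gSurv (m : ℕ) (t : ℝ) : ℝ :=
  (∑ k ∈ Finset.range m, ((m : ℝ) * t) ^ k / k.factorial) * Real.exp (-(m : ℝ) * t)

lemma gSurv_nonneg (m : ℕ) (t : ℝ) (ht : 0 ≤ t) : 0 ≤ gSurv m t := by
  unfold gSurv
  have hm : (0:ℝ) ≤ (m:ℝ) * t := by positivity
  apply mul_nonneg _ (Real.exp_pos _).le
  exact Finset.sum_nonneg fun k _ => by positivity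

lemma gSurv_le_one (m : ℕ) (t : ℝ) (ht : 0 ≤ t) : gSurv m t ≤ 1 := by
  unfold gSurv
  have hm : (0:ℝ) ≤ (m:ℝ) * t := by positivity
  calc (∑ k ∈ Finset.range m, ((m : ℝ) * t) ^ k / k.factorial) * Real.exp (-(m : ℝ) * t)
      ≤ Real.exp ((m:ℝ)*t) * Real.exp (-(m : ℝ) * t) :=
        mul_le_mul_of_nonneg_right (Real.sum_le_exp_of_nonneg hm m) (Real.exp_pos _).le
    _ = 1 := by rw [← Real.exp_add]; ring_nf; exact Real.exp_zero

lemma gSurv_hasDerivAt (m : ℕ) (hm : 1 ≤ m) (x : ℝ) :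
    HasDerivAt (gSurv m)
      (-((m : ℝ) ^ m * x ^ (m - 1) * Real.exp (-(m : ℝ) * x) / ((m - 1).factorial : ℝ))) x := by
  obtain ⟨n, rfl⟩ : ∃ n, m = n + 1 := ⟨m - 1, (Nat.succ_pred_eq_of_pos hm).symm⟩
  set M : ℝ := ((n + 1 : ℕ) : ℝ) with hM
  have hu : HasDerivAt (fun t => ∑ k ∈ Finset.range (n+1), (M * t) ^ k / k.factorial)
      (∑ k ∈ Finset.range (n+1), (k : ℝ) * (M * x) ^ (k - 1) * M / k.factorial) x := by
    apply HasDerivAt.fun_sum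
    intro k _
    have h1 : HasDerivAt (fun t : ℝ => (M * t) ^ k) ((k : ℝ) * (M * x) ^ (k - 1) * M) x := by
      have h0 : HasDerivAt (fun t : ℝ => M * t) M x := by
        simpa using (hasDerivAt_id x).const_mul M
      exact (hasDerivAt_pow k (M * x)).comp x h0
    exact h1.div_const _
  have hv : HasDerivAt (fun t : ℝ => Real.exp (-M * t)) (Real.exp (-M * x) * (-M)) x := by
    have h0 : HasDerivAt (fun t : ℝ => -M * t) (-M) x := by
      simpa using (hasDerivAt_id x).const_mul (-M)
    exact h0.exp
  have huv := hu.mul hv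
  refine HasDerivAt.congr_deriv huv ?_
  have hfac : ∀ i : ℕ, ((i+1).factorial : ℝ) = ((i+1 : ℕ) : ℝ) * (i.factorial : ℝ) := by
    intro i; rw [Nat.factorial_succ]; push_cast; ring
  have hS' : (∑ k ∈ Finset.range (n+1), (k : ℝ) * (M * x) ^ (k - 1) * M / k.factorial)
      = M * ∑ i ∈ Finset.range n, (M * x) ^ i / i.factorial := by
    rw [Finset.sum_range_succ']
    simp only [Nat.cast_zero, zero_mul, Nat.factorial_zero, Nat.cast_one, zero_div, add_zero]
    rw [Finset.mul_sum]
    apply Finset.sum_congr rfl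
    intro i _
    have : ((i+1 : ℕ) : ℝ) ≠ 0 := by positivity
    rw [hfac i]
    have h2 : (i + 1 - 1) = i := by omega
    rw [h2]
    field_simp
  rw [hS', Finset.sum_range_succ]
  have h3 : (n + 1 - 1) = n := by omega
  rw [h3]
  have h4 : M ^ (n+1) * x ^ n = M * (M * x) ^ n := by rw [mul_pow, pow_succ]; ring
  rw [h4]
  ring

lemma gSurv_tendsto (m : ℕ) (hm : 1 ≤ m) : Tendsto (gSurv m) atTop (nhds 0) := by
  have hfun : gSurv m = fun t => ∑ k ∈ Finset.range m,
      ((fun y => y ^ k * Real.exp (-y)) ((m : ℝ) * t)) / k.factorial := by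
    funext t
    unfold gSurv
    rw [Finset.sum_mul]
    apply Finset.sum_congr rfl
    intro k _
    rw [neg_mul]
    ring
  rw [hfun]
  have h0 : (0:ℝ) = ∑ k ∈ Finset.range m, (0:ℝ) / k.factorial := by simp
  rw [h0]
  apply tendsto_finset_sum
  intro k _
  apply Tendsto.div_const
  have hmul : Tendsto (fun t : ℝ => (m : ℝ) * t) atTop atTop := by
    apply Tendsto.const_mul_atTop _ tendsto_id
    exact_mod_cast Nat.pos_of_ne_zero (by omega)
  exact (tendsto_pow_mul_exp_neg_atTop_nhds_zero k).comp hmul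

lemma gamma_tail (m : ℕ) (hm : 1 ≤ m) (t : ℝ) (ht : 0 ≤ t) :
    ∫⁻ x in Set.Ioi t, ENNReal.ofReal (nakagamiGammaPdf m x) = ENNReal.ofReal (gSurv m t) := by
  set f : ℝ → ℝ := fun x => (m : ℝ) ^ m * x ^ (m - 1) * Real.exp (-(m : ℝ) * x) / ((m - 1).factorial : ℝ) with hf
  have hderiv : ∀ x ∈ Set.Ici t, HasDerivAt (fun y => -(gSurv m y)) (f x) x := by
    intro x _
    have h := (gSurv_hasDerivAt m hm x).neg
    rw [neg_neg] at h
    exact h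
  have hpos : ∀ x ∈ Set.Ioi t, 0 ≤ f x := by
    intro x hx
    have hx0 : 0 ≤ x := le_trans ht (le_of_lt hx)
    rw [hf]
    positivity
  have htend : Tendsto (fun y => -(gSurv m y)) atTop (nhds 0) := by
    simpa using (gSurv_tendsto m hm).neg
  have hint : IntegrableOn f (Set.Ioi t) :=
    integrableOn_Ioi_deriv_of_nonneg' hderiv hpos htend
  have hreal : ∫ x in Set.Ioi t, f x = gSurv m t := by
    rw [integral_Ioi_of_hasDerivAt_of_nonneg' hderiv hpos htend]
    ring
  have hcongr : ∫⁻ x in Set.Ioi t, ENNReal.ofReal (nakagamiGammaPdf m x)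
      = ∫⁻ x in Set.Ioi t, ENNReal.ofReal (f x) := by
    apply setLIntegral_congr_fun measurableSet_Ioi
    intro x hx
    have : 0 < x := lt_of_le_of_lt ht hx
    show ENNReal.ofReal (nakagamiGammaPdf m x) = ENNReal.ofReal (f x)
    rw [nakagamiGammaPdf, if_pos this]
  rw [hcongr, ← hreal]
  rw [← ofReal_integral_eq_lintegral_ofReal hint]
  exact (ae_restrict_of_forall_mem measurableSet_Ioi hpos)


lemma gSurv_continuous (m : ℕ) : Continuous (gSurv m) := by
  unfold gSurv
  apply Continuous.mul
  · apply continuous_finset_sum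
    intro k _
    exact ((continuous_const.mul continuous_id).pow k).div_const _
  · exact Real.continuous_exp.comp (continuous_const.mul continuous_id)



section Moments
variable {Ω : Type*} [MeasurableSpace Ω] (P : Measure Ω) [IsProbabilityMeasure P]
  (I : Ω → ℝ) (hI : Measurable I) (hI0 : ∀ ω, 0 ≤ I ω)
include hI hI0

lemma moment_integrable (j : ℕ) {s : ℝ} (hs : 0 < s) :
    Integrable (fun ω => I ω ^ j * Real.exp (-s * I ω)) P := by
  have hmeas : Measurable fun ω => I ω ^ j * Real.exp (-s * I ω) :=
    (hI.pow_const j).mul ((hI.const_mul (-s)).exp)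
  refine (integrable_const ((j.factorial : ℝ) / s ^ j)).mono' hmeas.aestronglyMeasurable ?_
  refine Filter.Eventually.of_forall fun ω => ?_
  rw [Real.norm_eq_abs, abs_of_nonneg (mul_nonneg (pow_nonneg (hI0 ω) _) (Real.exp_pos _).le)]
  exact pow_mul_exp_le' (hI0 ω) hs j

lemma moment_hasDerivAt (j : ℕ) {s : ℝ} (hs : 0 < s) :
    HasDerivAt (fun t => ∫ ω, I ω ^ j * Real.exp (-t * I ω) ∂P)
      (-∫ ω, I ω ^ (j + 1) * Real.exp (-s * I ω) ∂P) s := by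
  have hs2 : 0 < s / 2 := half_pos hs
  have key := hasDerivAt_integral_of_dominated_loc_of_deriv_le (μ := P)
    (F := fun t ω => I ω ^ j * Real.exp (-t * I ω))
    (F' := fun t ω => -(I ω ^ (j + 1) * Real.exp (-t * I ω)))
    (x₀ := s) (bound := fun _ => ((j + 1).factorial : ℝ) / (s / 2) ^ (j + 1)) (Metric.ball_mem_nhds s hs2)
    (Filter.Eventually.of_forall fun t =>
      (((hI.pow_const j).mul ((hI.const_mul (-t)).exp)).aestronglyMeasurable))
    (moment_integrable P I hI hI0 j hs)
    ((((hI.pow_const (j+1)).mul ((hI.const_mul (-s)).exp)).neg).aestronglyMeasurable)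
    (Filter.Eventually.of_forall fun ω => fun t ht => by
      have hts : s / 2 < t := by
        have := abs_lt.mp (mem_ball_iff_norm.mp ht)
        linarith [this.1, this.2]
      have h1 : Real.exp (-t * I ω) ≤ Real.exp (-(s/2) * I ω) := by
        apply Real.exp_le_exp.mpr
        have := hI0 ω
        nlinarith
      rw [norm_neg, Real.norm_eq_abs, abs_of_nonneg (mul_nonneg (pow_nonneg (hI0 ω) _) (Real.exp_pos _).le)]
      calc I ω ^ (j+1) * Real.exp (-t * I ω)
          ≤ I ω ^ (j+1) * Real.exp (-(s/2) * I ω) := by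
            apply mul_le_mul_of_nonneg_left h1 (pow_nonneg (hI0 ω) _)
        _ ≤ ((j + 1).factorial : ℝ) / (s / 2) ^ (j + 1) := pow_mul_exp_le' (hI0 ω) hs2 _)
    (integrable_const _)
    (Filter.Eventually.of_forall fun ω => fun t _ => by
      have h0 : HasDerivAt (fun t : ℝ => -t * I ω) (-(I ω)) t := by
        simpa using ((hasDerivAt_id t).neg.mul_const (I ω))
      have h1 := (h0.exp).const_mul (I ω ^ j)
      convert h1 using 1
      show -(I ω ^ (j + 1) * Real.exp (-t * I ω)) = _
      rw [pow_succ]; ring; rfl)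
  have := key.2
  rwa [integral_neg] at this

lemma laplace_iteratedDeriv (L : ℝ → ℝ) (hL : ∀ s, L s = ∫ ω, Real.exp (-s * I ω) ∂P)
    (j : ℕ) : ∀ {s : ℝ}, 0 < s →
    iteratedDeriv j L s = (-1) ^ j * ∫ ω, I ω ^ j * Real.exp (-s * I ω) ∂P := by
  induction j with
  | zero => intro s hs; simpa [iteratedDeriv_zero] using hL s
  | succ j ih =>
    intro s hs
    rw [iteratedDeriv_succ]
    have hev : iteratedDeriv j L =ᶠ[nhds s]
        fun t => (-1 : ℝ) ^ j * ∫ ω, I ω ^ j * Real.exp (-t * I ω) ∂P := by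
      filter_upwards [isOpen_Ioi.mem_nhds hs] with t ht using ih ht
    rw [hev.deriv_eq]
    have hd := (moment_hasDerivAt P I hI hI0 j hs).const_mul ((-1 : ℝ) ^ j)
    rw [hd.deriv, pow_succ]
    ring

end Moments

end Helpers

section Main
open Filter Finset

/-- Proposition 2 (exact coverage probability for the near NOMA user): with `H` Gamma of
shape `m` and rate `m`, `I ≥ 0` independent of `H` with Laplace transform `L`,
power allocation `a_m, a_n` with `a_m - a_n ε_f > 0` and `a_n - β a_m ε_t > 0`,
`ε* = max{ε_f/(a_m - a_n ε_f), ε_t/(a_n - β a_m ε_t)}`, path gain `c > 0` and noise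
`σ > 0`, the joint decoding probability equals the double-sum Laplace-derivative formula
evaluated at `m ε*/c`. -/
theorem noma_near_user_coverage_exact
    {Ω : Type*} [MeasurableSpace Ω] (P : Measure Ω) [IsProbabilityMeasure P]
    (m : ℕ) (hm : 1 ≤ m)
    (H I : Ω → ℝ) (hH : Measurable H) (hI : Measurable I)
    (hHlaw : P.map H = volume.withDensity (fun x => ENNReal.ofReal (nakagamiGammaPdf m x)))
    (hI0 : ∀ ω, 0 ≤ I ω) (hindep : IndepFun H I P)
    (L : ℝ → ℝ) (hL : ∀ s : ℝ, L s = ∫ ω, Real.exp (-s * I ω) ∂P)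
    (am an εf εt c σ : ℝ) (ham : 0 < am) (han : 0 < an) (hεf : 0 < εf) (hεt : 0 < εt)
    (hc : 0 < c) (hσ : 0 < σ) (β : ℝ) (hβ : 0 ≤ β)
    (hf : 0 < am - an * εf) (ht : 0 < an - β * am * εt)
    (εs : ℝ) (hεs : εs = max (εf / (am - an * εf)) (εt / (an - β * am * εt))) :
    (P {ω | εf < am * c * H ω / (an * c * H ω + I ω + σ) ∧
            εt < an * c * H ω / (I ω + σ + β * am * c * H ω)}).toReal
      = ∑ k ∈ Finset.range m, ∑ p ∈ Finset.range (k + 1),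
          (k.choose p : ℝ) * (((m : ℝ) * εs / c) ^ k / (Nat.factorial k : ℝ)) * σ ^ p
            * Real.exp (-((m : ℝ) * εs * σ) / c) * (-1 : ℝ) ^ (k - p)
            * iteratedDeriv (k - p) L ((m : ℝ) * εs / c) := by
  have hεs0 : 0 < εs := by
    rw [hεs]; exact lt_max_of_lt_left (div_pos hεf hf)
  have hm0 : (0:ℝ) < m := by exact_mod_cast Nat.pos_of_ne_zero (by omega)
  set s₀ : ℝ := (m : ℝ) * εs / c with hs₀def
  have hs₀ : 0 < s₀ := div_pos (mul_pos hm0 hεs0) hc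
  -- a.e. positivity of H
  have hnull : P {ω | H ω ≤ 0} = 0 := by
    have hset : {ω | H ω ≤ 0} = H ⁻¹' (Set.Iic 0) := rfl
    rw [hset, ← Measure.map_apply hH measurableSet_Iic, hHlaw,
      withDensity_apply _ measurableSet_Iic]
    have hzero : ∀ x ∈ Set.Iic (0:ℝ), ENNReal.ofReal (nakagamiGammaPdf m x) = 0 := by
      intro x hx
      rw [nakagamiGammaPdf, if_neg (not_lt.mpr hx)]
      exact ENNReal.ofReal_zero
    rw [setLIntegral_congr_fun measurableSet_Iic hzero,
      lintegral_zero]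
  have haeH : ∀ᵐ ω ∂P, 0 < H ω := by
    rw [ae_iff]
    simpa [not_lt] using hnull
  -- event rewriting
  set E' : Set Ω := {ω | εs * (I ω + σ) / c < H ω} with hE'def
  have hEae : {ω | εf < am * c * H ω / (an * c * H ω + I ω + σ) ∧
            εt < an * c * H ω / (I ω + σ + β * am * c * H ω)} =ᵐ[P] E' := by
    rw [Filter.eventuallyEq_set]
    filter_upwards [haeH] with ω hω
    have hi : 0 ≤ I ω := hI0 ω
    have hiσ : 0 < I ω + σ := by linarith
    have hch : 0 < c * H ω := mul_pos hc hω
    have hD1 : 0 < an * c * H ω + I ω + σ := by nlinarith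
    have hβam : 0 ≤ β * am * c * H ω :=
      mul_nonneg (mul_nonneg (mul_nonneg hβ ham.le) hc.le) hω.le
    have hD2 : 0 < I ω + σ + β * am * c * H ω := by linarith
    simp only [hE'def, Set.mem_setOf_eq]
    have key1 : εf < am * c * H ω / (an * c * H ω + I ω + σ) ↔
        εf / (am - an * εf) < c * H ω / (I ω + σ) := by
      rw [lt_div_iff₀ hD1, div_lt_div_iff₀ hf hiσ]
      constructor <;> intro hyp <;> nlinarith
    have key2 : εt < an * c * H ω / (I ω + σ + β * am * c * H ω) ↔
        εt / (an - β * am * εt) < c * H ω / (I ω + σ) := by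
      rw [lt_div_iff₀ hD2, div_lt_div_iff₀ ht hiσ]
      constructor <;> intro hyp <;> nlinarith
    have key3 : εs * (I ω + σ) / c < H ω ↔ εs < c * H ω / (I ω + σ) := by
      rw [div_lt_iff₀ hc, lt_div_iff₀ hiσ]
      constructor <;> intro hyp <;> nlinarith
    rw [key1, key2, key3, hεs, max_lt_iff]
  -- measure of E'
  haveI : IsProbabilityMeasure (P.map H) := Measure.isProbabilityMeasure_map hH.aemeasurable
  haveI : IsProbabilityMeasure (P.map I) := Measure.isProbabilityMeasure_map hI.aemeasurable
  have hA : MeasurableSet {p : ℝ × ℝ | εs * (p.2 + σ) / c < p.1} := by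
    apply measurableSet_lt
    · exact ((measurable_snd.add_const σ).const_mul εs).div_const c
    · exact measurable_fst
  have hmap : P.map (fun ω => (H ω, I ω)) = (P.map H).prod (P.map I) :=
    (indepFun_iff_map_prod_eq_prod_map_map hH.aemeasurable hI.aemeasurable).mp hindep
  have hPE' : P E' = ∫⁻ y, ENNReal.ofReal (gSurv m (εs * (y + σ) / c)) ∂(P.map I) := by
    have h1 : E' = (fun ω => (H ω, I ω)) ⁻¹' {p : ℝ × ℝ | εs * (p.2 + σ) / c < p.1} := rfl
    rw [h1, ← Measure.map_apply (hH.prodMk hI) hA, hmap, Measure.prod_apply_symm hA]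
    apply lintegral_congr_ae
    have haeI : ∀ᵐ y ∂(P.map I), 0 ≤ y := by
      rw [ae_iff]
      have h2 : {y : ℝ | ¬ 0 ≤ y} = Set.Iio 0 := by ext y; simp [not_le]
      rw [h2, Measure.map_apply hI measurableSet_Iio]
      have h3 : I ⁻¹' Set.Iio 0 = ∅ := by
        ext ω; simp only [Set.mem_preimage, Set.mem_Iio, Set.mem_empty_iff_false, iff_false,
          not_lt]
        exact hI0 ω
      rw [h3, measure_empty]
    filter_upwards [haeI] with y hy
    have hslice : (fun x => (x, y)) ⁻¹' {p : ℝ × ℝ | εs * (p.2 + σ) / c < p.1}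
        = Set.Ioi (εs * (y + σ) / c) := rfl
    have ht0 : 0 ≤ εs * (y + σ) / c := by positivity
    rw [hslice, hHlaw, withDensity_apply _ measurableSet_Ioi, gamma_tail m hm _ ht0]
  have ht0' : ∀ ω, 0 ≤ εs * (I ω + σ) / c := by
    intro ω
    have := hI0 ω
    positivity
  have hgmeas : Measurable fun y : ℝ => ENNReal.ofReal (gSurv m (εs * (y + σ) / c)) := by
    apply Measurable.ennreal_ofReal
    exact (gSurv_continuous m).measurable.comp
      (((measurable_id.add_const σ).const_mul εs).div_const c)
  have hP2 : ∫⁻ y, ENNReal.ofReal (gSurv m (εs * (y + σ) / c)) ∂(P.map I)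
      = ∫⁻ ω, ENNReal.ofReal (gSurv m (εs * (I ω + σ) / c)) ∂P := lintegral_map hgmeas hI
  have hintg : Integrable (fun ω => gSurv m (εs * (I ω + σ) / c)) P := by
    have hmeas : Measurable fun ω => gSurv m (εs * (I ω + σ) / c) :=
      (gSurv_continuous m).measurable.comp (((hI.add_const σ).const_mul εs).div_const c)
    refine (integrable_const (1:ℝ)).mono' hmeas.aestronglyMeasurable ?_
    refine Filter.Eventually.of_forall fun ω => ?_
    rw [Real.norm_eq_abs, abs_of_nonneg (gSurv_nonneg m _ (ht0' ω))]
    exact gSurv_le_one m _ (ht0' ω)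
  have hnn : 0 ≤ᵐ[P] fun ω => gSurv m (εs * (I ω + σ) / c) :=
    Filter.Eventually.of_forall fun ω => gSurv_nonneg m _ (ht0' ω)
  have hP3 : ∫⁻ ω, ENNReal.ofReal (gSurv m (εs * (I ω + σ) / c)) ∂P
      = ENNReal.ofReal (∫ ω, gSurv m (εs * (I ω + σ) / c) ∂P) :=
    (ofReal_integral_eq_lintegral_ofReal hintg hnn).symm
  rw [measure_congr hEae, hPE', hP2, hP3,
    ENNReal.toReal_ofReal (integral_nonneg fun ω => gSurv_nonneg m _ (ht0' ω))]
  -- pointwise expansion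
  have hpoint : ∀ y : ℝ, gSurv m (εs * (y + σ) / c)
      = ∑ k ∈ Finset.range m, ∑ p ∈ Finset.range (k + 1),
        ((k.choose p : ℝ) * (s₀ ^ k / k.factorial) * σ ^ p * Real.exp (-(s₀ * σ)))
          * (y ^ (k - p) * Real.exp (-s₀ * y)) := by
    intro y
    have harg : (m : ℝ) * (εs * (y + σ) / c) = s₀ * (y + σ) := by
      rw [hs₀def]; field_simp
    unfold gSurv
    rw [harg, Finset.sum_mul]
    apply Finset.sum_congr rfl
    intro k _
    have hexp : Real.exp (-(s₀ * (y + σ))) = Real.exp (-s₀ * y) * Real.exp (-(s₀ * σ)) := by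
      rw [← Real.exp_add]; ring_nf
    have hbin : (s₀ * (y + σ)) ^ k = s₀ ^ k * ∑ p ∈ Finset.range (k + 1),
        σ ^ p * y ^ (k - p) * (k.choose p : ℝ) := by
      rw [mul_pow, show y + σ = σ + y from add_comm y σ, add_pow]
    have harg2 : -(m : ℝ) * (εs * (y + σ) / c) = -(s₀ * (y + σ)) := by
      rw [hs₀def]; ring
    rw [harg2, hbin, hexp, Finset.mul_sum, Finset.sum_div, Finset.sum_mul]
    apply Finset.sum_congr rfl
    intro p _
    ring
  simp only [hpoint]
  have hMint : ∀ j : ℕ, Integrable (fun ω => I ω ^ j * Real.exp (-s₀ * I ω)) P :=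
    fun j => moment_integrable P I hI hI0 j hs₀
  rw [integral_finset_sum _ (fun k _ =>
    integrable_finset_sum _ (fun p _ => ((hMint (k - p)).const_mul _)))]
  apply Finset.sum_congr rfl
  intro k _
  rw [integral_finset_sum _ (fun p _ => ((hMint (k - p)).const_mul _))]
  apply Finset.sum_congr rfl
  intro p hp
  rw [integral_const_mul]
  rw [laplace_iteratedDeriv P I hI hI0 L hL (k - p) hs₀]
  have hexpc : Real.exp (-((m:ℝ) * εs * σ) / c) = Real.exp (-(s₀ * σ)) := by
    rw [hs₀def]; congr 1; ring
  rw [hexpc]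
  have hsq : (-1:ℝ) ^ (k - p) * (-1:ℝ) ^ (k - p) = 1 := by
    rw [← mul_pow]; norm_num
  set M := ∫ ω, I ω ^ (k - p) * Real.exp (-s₀ * I ω) ∂P with hM
  linear_combination
    (-((k.choose p : ℝ) * (s₀ ^ k / (k.factorial : ℝ)) * σ ^ p * Real.exp (-(s₀ * σ)) * M)) * hsq

end Main
end

section
/- Let (Ω, P) be a probability space, m ≥ 1 an integer, H a random variable with Gamma density m^m x^{m-1} e^{-mx}/(m-1)! on x > 0, and I a nonnegative random variable independent of H with Laplace transform L(s) = E[e^{-s I}]. Let a_m, a_n, ε_t, c, σ be positive reals with a_m - a_n ε_t > 0, and set ε_t^f = ε_t/(a_m - a_n ε_t). Then P( a_m c H/(a_n c H + I + σ) > ε_t ) = ∑_{k=0}^{m-1} ∑_{p=0}^{k} C(k,p) · ((m ε_t^f/c)^k / k!) · σ^p · e^{-(m ε_t^f σ)/c} · (-1)^{k-p} · L^{(k-p)}(m ε_t^f/c), where L^{(j)} denotes the j-th iterated derivative of L. -/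
open MeasureTheory Set Real ProbabilityTheory Filter

/-- `x^n e^{-bx} ≤ n!/b^n` for `x ≥ 0`, `b > 0`. -/
lemma pow_mul_exp_neg_le {b : ℝ} (hb : 0 < b) (n : ℕ) {x : ℝ} (hx : 0 ≤ x) :
    x ^ n * Real.exp (-(b * x)) ≤ (Nat.factorial n : ℝ) / b ^ n := by
  have h1 : (b * x) ^ n / (Nat.factorial n : ℝ) ≤ Real.exp (b * x) := by
    calc (b * x) ^ n / (Nat.factorial n : ℝ)
        ≤ ∑ i ∈ Finset.range (n + 1), (b * x) ^ i / (Nat.factorial i : ℝ) := by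
          exact Finset.single_le_sum (f := fun i => (b*x)^i / (Nat.factorial i : ℝ))
            (fun i _ => by positivity) (Finset.self_mem_range_succ n)
      _ ≤ Real.exp (b * x) := Real.sum_le_exp_of_nonneg (by positivity) _
  have hbn : (0:ℝ) < b ^ n := by positivity
  have h2 : x ^ n ≤ (Nat.factorial n : ℝ) / b ^ n * Real.exp (b * x) := by
    rw [div_le_iff₀ (by positivity)] at h1
    rw [mul_pow] at h1
    calc x ^ n = b ^ n * x ^ n / b ^ n := by field_simp
      _ ≤ Real.exp (b*x) * (Nat.factorial n : ℝ) / b ^ n := by gcongr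
      _ = (Nat.factorial n : ℝ) / b ^ n * Real.exp (b * x) := by ring
  calc x ^ n * Real.exp (-(b*x)) ≤ ((Nat.factorial n : ℝ) / b ^ n * Real.exp (b*x)) * Real.exp (-(b*x)) := by
        apply mul_le_mul_of_nonneg_right h2 (Real.exp_nonneg _)
    _ = (Nat.factorial n : ℝ) / b ^ n := by
        rw [mul_assoc, ← Real.exp_add]; simp

lemma erlang_sum_hasDerivAt (b : ℝ) (n : ℕ) (x : ℝ) :
    HasDerivAt (fun x => Real.exp (-(b*x)) * ∑ k ∈ Finset.range (n+1), (b*x)^k / (Nat.factorial k : ℝ))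
      (-(b * Real.exp (-(b*x)) * (b*x)^n / (Nat.factorial n : ℝ))) x := by
  have hexp : ∀ y : ℝ, HasDerivAt (fun x => Real.exp (-(b*x))) (-b * Real.exp (-(b*y))) y := by
    intro y
    have h1 : HasDerivAt (fun x : ℝ => -(b*x)) (-b) y := by
      have := ((hasDerivAt_id y).const_mul b).neg; simp at this; exact this
    have := h1.exp
    convert this using 1 <;> ring
  induction n with
  | zero =>
    have := hexp x
    convert this.mul_const ((b*x)^0 / (Nat.factorial 0 : ℝ)) using 1
    · rfl
    · rfl
    · funext y; simp
    · ring
  | succ n ih =>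
    have hterm : HasDerivAt (fun x => Real.exp (-(b*x)) * ((b*x)^(n+1) / (Nat.factorial (n+1) : ℝ)))
        (b * Real.exp (-(b*x)) * (b*x)^n / (Nat.factorial n : ℝ)
          - b * Real.exp (-(b*x)) * (b*x)^(n+1) / (Nat.factorial (n+1) : ℝ)) x := by
      have hpow : HasDerivAt (fun x : ℝ => (b*x)^(n+1) / (Nat.factorial (n+1) : ℝ))
          (((n:ℝ)+1) * (b*x)^n * b / (Nat.factorial (n+1) : ℝ)) x := by
        have h1 : HasDerivAt (fun x : ℝ => b*x) b x := by
          simpa using (hasDerivAt_id x).const_mul b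
        have := (h1.pow (n+1)).div_const (Nat.factorial (n+1) : ℝ)
        convert this using 1
        · rfl
        · rfl
        · rfl
        push_cast; ring
      have := (hexp x).mul hpow
      convert this using 1
      · rfl
      · rfl
      · rfl
      have hfac : (Nat.factorial (n+1) : ℝ) = ((n:ℝ)+1) * (Nat.factorial n : ℝ) := by
        rw [Nat.factorial_succ]; push_cast; ring
      have h0 : (Nat.factorial n : ℝ) ≠ 0 := Nat.cast_ne_zero.2 (Nat.factorial_ne_zero n)
      field_simp [hfac]
      rw [hfac]
      ring
    have := ih.add hterm
    convert this using 1
    · rfl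
    · rfl
    · funext y
      simp only [Pi.add_apply]
      rw [Finset.sum_range_succ]
      ring
    · ring

lemma erlang_tail (m : ℕ) (hm : 1 ≤ m) {t : ℝ} (ht : 0 ≤ t) :
    ∫ x in Ioi t, nakagamiGammaPdf m x
      = Real.exp (-((m:ℝ)*t)) * ∑ k ∈ Finset.range m, ((m:ℝ)*t)^k / (Nat.factorial k : ℝ) := by
  obtain ⟨n, rfl⟩ : ∃ n, m = n + 1 := ⟨m - 1, (Nat.succ_pred_eq_of_pos hm).symm⟩
  set b : ℝ := ((n:ℝ) + 1) with hbdef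
  have hb : 0 < b := by positivity
  have hb1 : 1 ≤ b := by simp [hbdef]
  have hcast : ((n + 1 : ℕ) : ℝ) = b := by push_cast [hbdef]; ring
  set f : ℝ → ℝ := fun x => -(Real.exp (-(b*x)) * ∑ k ∈ Finset.range (n+1), (b*x)^k / (Nat.factorial k : ℝ)) with hf
  set f' : ℝ → ℝ := fun x => b * Real.exp (-(b*x)) * (b*x)^n / (Nat.factorial n : ℝ) with hf'
  have hderiv : ∀ x ∈ Ici t, HasDerivAt f (f' x) x := by
    intro x _
    have h := (erlang_sum_hasDerivAt b n x).neg; rw [neg_neg] at h; exact h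
  have hint : IntegrableOn f' (Ioi t) := by
    have hcont : Continuous f' := by
      rw [hf']; continuity
    refine Integrable.mono' (((exp_neg_integrableOn_Ioi t (by norm_num : (0:ℝ) < 1/2))).const_mul
      (b ^ (n+1) * 2 ^ n)) hcont.aestronglyMeasurable ?_
    filter_upwards [ae_restrict_mem measurableSet_Ioi] with x hx
    have hx0 : 0 ≤ x := le_trans ht (le_of_lt hx)
    have h1 : x ^ n * Real.exp (-(1/2 * x)) ≤ (Nat.factorial n : ℝ) / (1/2:ℝ) ^ n :=
      pow_mul_exp_neg_le (by norm_num) n hx0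
    have hfacpos : (0:ℝ) < (Nat.factorial n : ℝ) := by positivity
    have hval : f' x = b^(n+1) / (Nat.factorial n : ℝ) * (x^n * Real.exp (-(b*x))) := by
      show b * Real.exp (-(b*x)) * (b*x)^n / (Nat.factorial n : ℝ) = _
      rw [mul_pow]; ring
    have hexple : Real.exp (-(b*x)) ≤ Real.exp (-(1/2*x)) * Real.exp (-(1/2*x)) := by
      rw [← Real.exp_add, Real.exp_le_exp]
      nlinarith
    have hexp2 : Real.exp (-(1/2*x)) ≤ 1 := by
      rw [Real.exp_le_one_iff]; nlinarith
    rw [Real.norm_eq_abs, abs_of_nonneg (by rw [hval]; positivity)]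
    rw [hval]
    calc b^(n+1) / (Nat.factorial n : ℝ) * (x^n * Real.exp (-(b*x)))
        ≤ b^(n+1) / (Nat.factorial n : ℝ) * ((x^n * Real.exp (-(1/2*x))) * Real.exp (-(1/2*x))) := by
          apply mul_le_mul_of_nonneg_left _ (by positivity)
          calc x^n * Real.exp (-(b*x)) ≤ x^n * (Real.exp (-(1/2*x)) * Real.exp (-(1/2*x))) :=
                mul_le_mul_of_nonneg_left hexple (by positivity)
            _ = (x^n * Real.exp (-(1/2*x))) * Real.exp (-(1/2*x)) := by ring
      _ ≤ b^(n+1) / (Nat.factorial n : ℝ) * (((Nat.factorial n : ℝ) / (1/2:ℝ)^n) * Real.exp (-(1/2*x))) := by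
          apply mul_le_mul_of_nonneg_left _ (by positivity)
          exact mul_le_mul_of_nonneg_right h1 (Real.exp_nonneg _)
      _ = b ^ (n+1) * 2^n * Real.exp (-(1/2 * x)) := by
          field_simp
          ring_nf
          rw [← mul_pow]; norm_num
      _ = b ^ (n+1) * 2^n * Real.exp (-(1/2) * x) := by ring_nf
  have htend : Tendsto f atTop (nhds 0) := by
    rw [hf]
    have : Tendsto (fun x => Real.exp (-(b*x)) * ∑ k ∈ Finset.range (n+1), (b*x)^k / (Nat.factorial k : ℝ)) atTop (nhds 0) := by
      have heq : (fun x => Real.exp (-(b*x)) * ∑ k ∈ Finset.range (n+1), (b*x)^k / (Nat.factorial k : ℝ))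
          = fun x => ∑ k ∈ Finset.range (n+1), (b*x)^k * Real.exp (-(b*x)) / (Nat.factorial k : ℝ) := by
        funext x
        rw [Finset.mul_sum]
        congr 1; funext k; ring
      rw [heq]
      have h0 : (0:ℝ) = ∑ k ∈ Finset.range (n+1), (0:ℝ) := by simp
      rw [h0]
      apply tendsto_finset_sum
      intro k _
      have hcomp : Tendsto (fun x : ℝ => b * x) atTop atTop :=
        Tendsto.const_mul_atTop hb tendsto_id
      have := ((tendsto_pow_mul_exp_neg_atTop_nhds_zero k).div_const (Nat.factorial k : ℝ)).comp hcomp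
      rw [zero_div] at this; exact this
    simpa using this.neg
  have hkey := integral_Ioi_of_hasDerivAt_of_tendsto' hderiv hint htend
  have hcongr : ∫ x in Ioi t, nakagamiGammaPdf (n+1) x = ∫ x in Ioi t, f' x := by
    apply setIntegral_congr_fun measurableSet_Ioi
    intro x hx
    have hx0 : 0 < x := lt_of_le_of_lt ht hx
    show _ = b * Real.exp (-(b*x)) * (b*x)^n / (Nat.factorial n : ℝ)
    rw [nakagamiGammaPdf, if_pos hx0]
    simp only [Nat.add_sub_cancel, hcast]
    rw [mul_pow, pow_succ]
    ring
  rw [hcongr, hkey, hf, hcast]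
  ring

lemma nakagami_measurable (m : ℕ) : Measurable (nakagamiGammaPdf m) := by
  unfold nakagamiGammaPdf
  apply Measurable.ite
  · exact measurableSet_lt measurable_const measurable_id
  · fun_prop
  · exact measurable_const

lemma nakagami_integrableOn (m : ℕ) (hm : 1 ≤ m) {t : ℝ} (ht : 0 ≤ t) :
    IntegrableOn (nakagamiGammaPdf m) (Ioi t) := by
  refine Integrable.mono' (((exp_neg_integrableOn_Ioi t (by norm_num : (0:ℝ) < 1/2))).const_mul
    ((m:ℝ) ^ m * 2 ^ (m-1))) (nakagami_measurable m).aestronglyMeasurable ?_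
  filter_upwards [ae_restrict_mem measurableSet_Ioi] with x hx
  have hx0 : 0 < x := lt_of_le_of_lt ht hx
  have hm1 : (1:ℝ) ≤ (m:ℝ) := by exact_mod_cast hm
  have h1 : x ^ (m-1) * Real.exp (-(1/2 * x)) ≤ (Nat.factorial (m-1) : ℝ) / (1/2:ℝ) ^ (m-1) :=
    pow_mul_exp_neg_le (by norm_num) (m-1) hx0.le
  have hfacpos : (0:ℝ) < (Nat.factorial (m-1) : ℝ) := by positivity
  have hexple : Real.exp (-(m:ℝ)*x) ≤ Real.exp (-(1/2*x)) * Real.exp (-(1/2*x)) := by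
    rw [← Real.exp_add, Real.exp_le_exp]
    nlinarith
  rw [nakagamiGammaPdf, if_pos hx0, Real.norm_eq_abs, abs_of_nonneg (by positivity)]
  calc (m:ℝ)^m * x^(m-1) * Real.exp (-(m:ℝ)*x) / (Nat.factorial (m-1) : ℝ)
      = (m:ℝ)^m * (x^(m-1) * Real.exp (-(m:ℝ)*x)) / (Nat.factorial (m-1) : ℝ) := by ring
    _ ≤ (m:ℝ)^m * (x^(m-1) * (Real.exp (-(1/2*x)) * Real.exp (-(1/2*x)))) / (Nat.factorial (m-1) : ℝ) := by
        gcongr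
    _ = (m:ℝ)^m * ((x^(m-1) * Real.exp (-(1/2*x))) * Real.exp (-(1/2*x))) / (Nat.factorial (m-1) : ℝ) := by ring
    _ ≤ (m:ℝ)^m * (((Nat.factorial (m-1) : ℝ) / (1/2:ℝ)^(m-1)) * Real.exp (-(1/2*x))) / (Nat.factorial (m-1) : ℝ) := by
        gcongr
    _ = (m:ℝ)^m * 2^(m-1) * Real.exp (-(1/2) * x) := by
        field_simp
        ring_nf
        rw [← mul_pow]; norm_num

section laplace
variable {Ω : Type*} [MeasurableSpace Ω] (P : Measure Ω) [IsProbabilityMeasure P]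
  (I : Ω → ℝ) (hI : Measurable I) (hI0 : ∀ ω, 0 ≤ I ω)
include hI hI0

/-- integrability of `(-I)^j e^{-sI}` for `s > 0`. -/
lemma lap_integrable {s : ℝ} (hs : 0 < s) (j : ℕ) :
    Integrable (fun ω => (-I ω) ^ j * Real.exp (-s * I ω)) P := by
  have hmeas : AEStronglyMeasurable (fun ω => (-I ω) ^ j * Real.exp (-s * I ω)) P :=
    ((hI.neg.pow_const j).mul ((hI.const_mul (-s)).exp)).aestronglyMeasurable
  refine (integrable_const ((Nat.factorial j : ℝ) / s ^ j)).mono' hmeas ?_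
  filter_upwards with ω
  have : |(-I ω) ^ j * Real.exp (-s * I ω)| = (I ω) ^ j * Real.exp (-(s * I ω)) := by
    rw [abs_mul, abs_pow, abs_neg, abs_of_nonneg (hI0 ω), abs_of_pos (Real.exp_pos _),
      neg_mul]
  rw [Real.norm_eq_abs, this]
  exact pow_mul_exp_neg_le hs j (hI0 ω)

lemma lap_hasDerivAt {s₀ : ℝ} (hs : 0 < s₀) (j : ℕ) :
    HasDerivAt (fun s => ∫ ω, (-I ω) ^ j * Real.exp (-s * I ω) ∂P)
      (∫ ω, (-I ω) ^ (j + 1) * Real.exp (-s₀ * I ω) ∂P) s₀ := by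
  have hmeas : ∀ (s : ℝ) (n : ℕ),
      AEStronglyMeasurable (fun ω => (-I ω) ^ n * Real.exp (-s * I ω)) P := fun s n =>
    ((hI.neg.pow_const n).mul ((hI.const_mul (-s)).exp)).aestronglyMeasurable
  have key := hasDerivAt_integral_of_dominated_loc_of_deriv_le (μ := P)
    (F := fun s ω => (-I ω) ^ j * Real.exp (-s * I ω))
    (F' := fun s ω => (-I ω) ^ (j + 1) * Real.exp (-s * I ω))
    (x₀ := s₀) (bound := fun _ => (Nat.factorial (j+1) : ℝ) / (s₀ / 2) ^ (j+1))
    (Metric.ball_mem_nhds s₀ (half_pos hs))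
    (Filter.Eventually.of_forall fun s => hmeas s j)
    (lap_integrable P I hI hI0 hs j)
    (hmeas s₀ (j+1))
    ?_ (integrable_const _) ?_
  · exact key.2
  · filter_upwards with ω s hsball
    have hs2 : s₀ / 2 ≤ s := by
      have := abs_lt.1 (by simpa [Metric.mem_ball, Real.dist_eq] using hsball)
      linarith [this.1]
    have h1 : |(-I ω) ^ (j+1) * Real.exp (-s * I ω)|
        = (I ω) ^ (j+1) * Real.exp (-(s * I ω)) := by
      rw [abs_mul, abs_pow, abs_neg, abs_of_nonneg (hI0 ω), abs_of_pos (Real.exp_pos _), neg_mul]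
    rw [Real.norm_eq_abs, h1]
    calc (I ω) ^ (j+1) * Real.exp (-(s * I ω))
        ≤ (I ω) ^ (j+1) * Real.exp (-(s₀/2 * I ω)) := by
          apply mul_le_mul_of_nonneg_left _ (pow_nonneg (hI0 ω) _)
          apply Real.exp_le_exp.2
          simp only [neg_le_neg_iff]
          exact mul_le_mul_of_nonneg_right hs2 (hI0 ω)
      _ ≤ (Nat.factorial (j+1) : ℝ) / (s₀/2) ^ (j+1) :=
          pow_mul_exp_neg_le (half_pos hs) (j+1) (hI0 ω)
  · filter_upwards with ω s _
    have h : HasDerivAt (fun s : ℝ => Real.exp (-s * I ω)) (-I ω * Real.exp (-s * I ω)) s := by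
      have : HasDerivAt (fun s : ℝ => -s * I ω) (-I ω) s := by
        simpa using (hasDerivAt_id s).neg.mul_const (I ω)
      have h2 := this.exp
      convert h2 using 1
      ring
    have := h.const_mul ((-I ω) ^ j)
    convert this using 1
    · rfl
    ring
end laplace

section lap2
variable {Ω : Type*} [MeasurableSpace Ω] (P : Measure Ω) [IsProbabilityMeasure P]
  (I : Ω → ℝ) (hI : Measurable I) (hI0 : ∀ ω, 0 ≤ I ω)
include hI hI0

lemma lap_iteratedDeriv (L : ℝ → ℝ) (hL : ∀ s : ℝ, L s = ∫ ω, Real.exp (-s * I ω) ∂P)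
    (j : ℕ) : ∀ {s : ℝ}, 0 < s →
    iteratedDeriv j L s = ∫ ω, (-I ω) ^ j * Real.exp (-s * I ω) ∂P := by
  induction j with
  | zero => intro s hs; simpa [iteratedDeriv_zero] using hL s
  | succ j ih =>
    intro s hs
    rw [iteratedDeriv_succ]
    have hev : iteratedDeriv j L =ᶠ[nhds s]
        (fun s => ∫ ω, (-I ω) ^ j * Real.exp (-s * I ω) ∂P) :=
      Filter.eventuallyEq_of_mem (Ioi_mem_nhds hs) (fun x hx => ih hx)
    rw [hev.deriv_eq]
    exact (lap_hasDerivAt P I hI hI0 hs j).deriv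
end lap2

/-- helper: nonnegativity of erlang tail expression -/
lemma erlangT_nonneg (m : ℕ) {u : ℝ} (hu : 0 ≤ u) :
    0 ≤ Real.exp (-((m:ℝ)*u)) * ∑ k ∈ Finset.range m, ((m:ℝ)*u)^k / (Nat.factorial k : ℝ) := by
  apply mul_nonneg (Real.exp_nonneg _)
  apply Finset.sum_nonneg
  intro k _
  have : (0:ℝ) ≤ (m:ℝ)*u := mul_nonneg (Nat.cast_nonneg m) hu
  positivity

lemma erlangT_le (m : ℕ) {u : ℝ} (hu : 0 ≤ u) :
    Real.exp (-((m:ℝ)*u)) * ∑ k ∈ Finset.range m, ((m:ℝ)*u)^k / (Nat.factorial k : ℝ) ≤ m := by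
  rw [Finset.mul_sum]
  calc ∑ k ∈ Finset.range m, Real.exp (-((m:ℝ)*u)) * (((m:ℝ)*u)^k / (Nat.factorial k : ℝ))
      ≤ ∑ k ∈ Finset.range m, 1 := by
        apply Finset.sum_le_sum
        intro k _
        have hmu : (0:ℝ) ≤ (m:ℝ)*u := mul_nonneg (Nat.cast_nonneg m) hu
        have hb := pow_mul_exp_neg_le one_pos k hmu
        rw [one_mul, one_pow, div_one] at hb
        have hkf : (0:ℝ) < (Nat.factorial k : ℝ) := by positivity
        have h2 : Real.exp (-((m:ℝ)*u)) * (((m:ℝ)*u)^k / (Nat.factorial k : ℝ))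
            = (((m:ℝ)*u)^k * Real.exp (-((m:ℝ)*u))) / (Nat.factorial k : ℝ) := by ring
        rw [h2, div_le_one hkf]
        exact hb
    _ = m := by simp

lemma expand_pointwise (s σ i : ℝ) (k : ℕ) :
    Real.exp (-(s*(i+σ))) * ((s*(i+σ))^k / (Nat.factorial k : ℝ))
      = ∑ p ∈ Finset.range (k+1),
          ((Nat.choose k p : ℝ) * (s^k / (Nat.factorial k : ℝ)) * σ^p * Real.exp (-(s*σ))
              * (-1:ℝ)^(k-p)) * ((-i)^(k-p) * Real.exp (-s * i)) := by
  have he : Real.exp (-(s*(i+σ))) = Real.exp (-(s*σ)) * Real.exp (-s * i) := by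
    rw [← Real.exp_add]; ring_nf
  have hbin : (s*(i+σ))^k = s^k * ∑ p ∈ Finset.range (k+1), σ^p * i^(k-p) * (Nat.choose k p : ℝ) := by
    rw [show s*(i+σ) = s*(σ+i) by ring, mul_pow, add_pow]
  rw [he, hbin, Finset.mul_sum]
  rw [Finset.sum_div, Finset.mul_sum]
  apply Finset.sum_congr rfl
  intro p _
  have key : ((-1:ℝ))^(k-p) * (-i)^(k-p) = i^(k-p) := by
    rw [← mul_pow]; ring_nf
  calc Real.exp (-(s*σ)) * Real.exp (-s*i) * (s^k * (σ^p * i^(k-p) * (Nat.choose k p : ℝ)) / (Nat.factorial k : ℝ))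
      = Real.exp (-(s*σ)) * Real.exp (-s*i) * (s^k * (σ^p * ((-1:ℝ))^(k-p) * (-i)^(k-p) * (Nat.choose k p : ℝ)) / (Nat.factorial k : ℝ)) := by
        rw [← key]; ring
    _ = ((Nat.choose k p : ℝ) * (s^k / (Nat.factorial k : ℝ)) * σ^p * Real.exp (-(s*σ))
          * (-1:ℝ)^(k-p)) * ((-i)^(k-p) * Real.exp (-s * i)) := by ring


/-- Proposition 3 (exact coverage probability for the far NOMA user): with `H` Gamma of
shape `m` and rate `m`, `I ≥ 0` independent of `H` with Laplace transform `L`, power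
allocation `a_m, a_n` with `a_m - a_n ε_t > 0`, `ε_t^f = ε_t/(a_m - a_n ε_t)`, path gain
`c > 0` and noise `σ > 0`, the decoding probability equals the double-sum
Laplace-derivative formula evaluated at `m ε_t^f/c`. -/
theorem noma_far_user_coverage_exact
    {Ω : Type*} [MeasurableSpace Ω] (P : Measure Ω) [IsProbabilityMeasure P]
    (m : ℕ) (hm : 1 ≤ m)
    (H I : Ω → ℝ) (hH : Measurable H) (hI : Measurable I)
    (hHlaw : P.map H = volume.withDensity (fun x => ENNReal.ofReal (nakagamiGammaPdf m x)))
    (hI0 : ∀ ω, 0 ≤ I ω) (hindep : IndepFun H I P)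
    (L : ℝ → ℝ) (hL : ∀ s : ℝ, L s = ∫ ω, Real.exp (-s * I ω) ∂P)
    (am an εt c σ : ℝ) (ham : 0 < am) (han : 0 < an) (hεt : 0 < εt)
    (hc : 0 < c) (hσ : 0 < σ) (ht : 0 < am - an * εt)
    (εtf : ℝ) (hεtf : εtf = εt / (am - an * εt)) :
    (P {ω | εt < am * c * H ω / (an * c * H ω + I ω + σ)}).toReal
      = ∑ k ∈ Finset.range m, ∑ p ∈ Finset.range (k + 1),
          (k.choose p : ℝ) * (((m : ℝ) * εtf / c) ^ k / (Nat.factorial k : ℝ)) * σ ^ p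
            * Real.exp (-((m : ℝ) * εtf * σ) / c) * (-1 : ℝ) ^ (k - p)
            * iteratedDeriv (k - p) L ((m : ℝ) * εtf / c) := by
  have hεtf0 : 0 < εtf := by rw [hεtf]; positivity
  have hm0 : (0:ℝ) < (m:ℝ) := by exact_mod_cast hm
  set s : ℝ := (m:ℝ) * εtf / c with hs_def
  have hs : 0 < s := div_pos (mul_pos hm0 hεtf0) hc
  -- a.e. positivity of H
  have hae : ∀ᵐ ω ∂P, 0 < H ω := by
    rw [ae_iff]
    have h1 : {ω | ¬ 0 < H ω} = H ⁻¹' (Iic 0) := by ext ω; simp [not_lt]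
    rw [h1, ← Measure.map_apply hH measurableSet_Iic, hHlaw,
      withDensity_apply _ measurableSet_Iic]
    have hz : ∀ᵐ x ∂(volume.restrict (Iic 0)), ENNReal.ofReal (nakagamiGammaPdf m x) = 0 := by
      filter_upwards [ae_restrict_mem measurableSet_Iic] with x hx
      rw [mem_Iic] at hx
      simp [nakagamiGammaPdf, not_lt.2 hx]
    rw [lintegral_congr_ae hz, lintegral_zero]
  set g : ℝ → ℝ := fun y => εtf * (y + σ) / c with hg
  have hg_pos : ∀ y : ℝ, 0 ≤ y → 0 < g y := by
    intro y hy
    rw [hg]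
    exact div_pos (mul_pos hεtf0 (by linarith)) hc
  -- event rewrite
  have hEE' : P {ω | εt < am * c * H ω / (an * c * H ω + I ω + σ)}
      = P {ω | g (I ω) < H ω} := by
    apply measure_congr
    rw [Filter.eventuallyEq_set]
    filter_upwards [hae] with ω hω
    show εt < am * c * H ω / (an * c * H ω + I ω + σ) ↔ g (I ω) < H ω
    have hIω := hI0 ω
    have hD : 0 < an * c * H ω + I ω + σ := by positivity
    rw [lt_div_iff₀ hD]
    simp only [hg]
    rw [div_lt_iff₀ hc, hεtf, div_mul_eq_mul_div, div_lt_iff₀ ht]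
    constructor <;> intro h <;> nlinarith [h]
  -- product measure
  have hmap : P.map (fun ω => (H ω, I ω)) = (P.map H).prod (P.map I) :=
    (indepFun_iff_map_prod_eq_prod_map_map hH.aemeasurable hI.aemeasurable).1 hindep
  haveI hμH : IsProbabilityMeasure (P.map H) := Measure.isProbabilityMeasure_map hH.aemeasurable
  haveI hμI : IsProbabilityMeasure (P.map I) := Measure.isProbabilityMeasure_map hI.aemeasurable
  have hgmeas : Measurable g := by
    rw [hg]; fun_prop
  have hSmeas : MeasurableSet {p : ℝ × ℝ | g p.2 < p.1} :=
    measurableSet_lt (hgmeas.comp measurable_snd) measurable_fst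
  have hPE' : P {ω | g (I ω) < H ω} = ∫⁻ y, (P.map H) (Ioi (g y)) ∂(P.map I) := by
    have h1 : {ω | g (I ω) < H ω} = (fun ω => (H ω, I ω)) ⁻¹' {p : ℝ×ℝ | g p.2 < p.1} := rfl
    rw [h1, ← Measure.map_apply (hH.prodMk hI) hSmeas, hmap,
      Measure.prod_apply_symm hSmeas]
    exact lintegral_congr fun y => rfl
  -- tail formula
  set T : ℝ → ℝ := fun u => Real.exp (-((m:ℝ)*u)) * ∑ k ∈ Finset.range m, ((m:ℝ)*u)^k / (Nat.factorial k : ℝ) with hT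
  have htail : ∀ u : ℝ, 0 ≤ u → (P.map H) (Ioi u) = ENNReal.ofReal (T u) := by
    intro u hu
    rw [hHlaw, withDensity_apply _ measurableSet_Ioi]
    have hnn : 0 ≤ᵐ[volume.restrict (Ioi u)] nakagamiGammaPdf m := by
      filter_upwards with x
      unfold nakagamiGammaPdf
      split <;> positivity
    rw [← ofReal_integral_eq_lintegral_ofReal (nakagami_integrableOn m hm hu) hnn,
      erlang_tail m hm hu]
  have haeI : ∀ᵐ y ∂(P.map I), 0 ≤ y := by
    rw [ae_iff]
    have h1 : {y : ℝ | ¬ 0 ≤ y} = Iio 0 := by ext y; simp [not_le]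
    rw [h1, Measure.map_apply hI measurableSet_Iio]
    have h2 : I ⁻¹' (Iio 0) = ∅ := by
      ext ω; simp only [mem_preimage, mem_Iio, mem_empty_iff_false, iff_false, not_lt]
      exact hI0 ω
    simp [h2]
  -- continuity of T and g
  have hTcont : Continuous T := by
    rw [hT]
    exact (Real.continuous_exp.comp (continuous_const.mul continuous_id).neg).mul
      (continuous_finset_sum _ fun k _ =>
        ((continuous_const.mul continuous_id).pow k).div_const _)
  have hgcont : Continuous g := by
    rw [hg]
    fun_prop
  -- from lintegral to integral
  have hTg_int : Integrable (fun y => T (g y)) (P.map I) := by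
    refine (integrable_const (m:ℝ)).mono' (hTcont.comp hgcont).aestronglyMeasurable ?_
    filter_upwards [haeI] with y hy
    have hu := (hg_pos y hy).le
    rw [Real.norm_eq_abs, abs_of_nonneg (erlangT_nonneg m hu)]
    exact erlangT_le m hu
  have hTg_nn : 0 ≤ᵐ[P.map I] fun y => T (g y) := by
    filter_upwards [haeI] with y hy
    exact erlangT_nonneg m (hg_pos y hy).le
  have hstep : ∫⁻ y, (P.map H) (Ioi (g y)) ∂(P.map I)
      = ENNReal.ofReal (∫ y, T (g y) ∂(P.map I)) := by
    rw [lintegral_congr_ae (haeI.mono fun y hy => htail (g y) (hg_pos y hy).le),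
      ← ofReal_integral_eq_lintegral_ofReal hTg_int hTg_nn]
  have hpull : ∫ y, T (g y) ∂(P.map I) = ∫ ω, T (g (I ω)) ∂P :=
    integral_map hI.aemeasurable (hTcont.comp hgcont).aestronglyMeasurable
  have hRnn : 0 ≤ ∫ ω, T (g (I ω)) ∂P :=
    integral_nonneg fun ω => erlangT_nonneg m (hg_pos _ (hI0 ω)).le
  rw [hEE', hPE', hstep, hpull, ENNReal.toReal_ofReal hRnn]
  -- final expansion
  have hmg : ∀ y : ℝ, (m:ℝ) * g y = s * (y + σ) := by
    intro y
    rw [hg, hs_def]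
    field_simp
  have hsσ : Real.exp (-(s*σ)) = Real.exp (-((m : ℝ) * εtf * σ) / c) := by
    congr 1
    rw [hs_def]
    ring
  have hptwise : ∀ ω, T (g (I ω))
      = ∑ k ∈ Finset.range m, ∑ p ∈ Finset.range (k+1),
          ((Nat.choose k p : ℝ) * (s^k / (Nat.factorial k : ℝ)) * σ^p * Real.exp (-(s*σ))
              * (-1:ℝ)^(k-p)) * ((-I ω)^(k-p) * Real.exp (-s * I ω)) := by
    intro ω
    rw [hT]
    simp only
    rw [hmg (I ω), Finset.mul_sum]
    apply Finset.sum_congr rfl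
    intro k _
    exact expand_pointwise s σ (I ω) k
  have hint_term := lap_integrable P I hI hI0 hs
  have hld := lap_iteratedDeriv P I hI hI0 L hL
  calc ∫ ω, T (g (I ω)) ∂P
      = ∫ ω, ∑ k ∈ Finset.range m, ∑ p ∈ Finset.range (k+1),
          ((Nat.choose k p : ℝ) * (s^k / (Nat.factorial k : ℝ)) * σ^p * Real.exp (-(s*σ))
              * (-1:ℝ)^(k-p)) * ((-I ω)^(k-p) * Real.exp (-s * I ω)) ∂P := by
        exact integral_congr_ae (Filter.Eventually.of_forall hptwise)
    _ = ∑ k ∈ Finset.range m, ∑ p ∈ Finset.range (k+1),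
          ((Nat.choose k p : ℝ) * (s^k / (Nat.factorial k : ℝ)) * σ^p * Real.exp (-(s*σ))
              * (-1:ℝ)^(k-p)) * ∫ ω, (-I ω)^(k-p) * Real.exp (-s * I ω) ∂P := by
        rw [integral_finset_sum _ fun k _ => integrable_finset_sum _ fun p _ =>
          (hint_term (k-p)).const_mul _]
        apply Finset.sum_congr rfl
        intro k _
        rw [integral_finset_sum _ fun p _ => (hint_term (k-p)).const_mul _]
        exact Finset.sum_congr rfl fun p _ => integral_const_mul _ _
    _ = ∑ k ∈ Finset.range m, ∑ p ∈ Finset.range (k + 1),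
          (k.choose p : ℝ) * (s ^ k / (Nat.factorial k : ℝ)) * σ ^ p
            * Real.exp (-((m : ℝ) * εtf * σ) / c) * (-1 : ℝ) ^ (k - p)
            * iteratedDeriv (k - p) L s := by
        apply Finset.sum_congr rfl; intro k _
        apply Finset.sum_congr rfl; intro p _
        rw [← hld (k-p) hs, hsσ]
end
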